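/- arXiv:1404.1826 — 2 statements merged into one kernel-verified Lean document; each statement's English description precedes it below -/
import Mathlib

section
/- Let f = h + conj(g) ∈ Ľ_H^α and J_f(z) = |h'(z)|² - |g'(z)|². Then for z ∈ Δ with |z| < α, J_f(z) ≤ (1 - α²)(1 + |z|)³ / ((1 - α|z|)²(1 - |z|)⁵), and for z ∈ Δ with |z| ≥ α, J_f(z) ≤ (1 + |z|)² / (1 - |z|)⁶. -/
open Metric Set Complex Filter Topology


-- Schwarz lemma wrappers
lemma mySchwarz {f : ℂ → ℂ} (hd : DifferentiableOn ℂ f (ball (0:ℂ) 1))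
    (hm : MapsTo f (ball (0:ℂ) 1) (ball (0:ℂ) 1)) (h0 : f 0 = 0) {z : ℂ}
    (hz : z ∈ ball (0:ℂ) 1) : ‖f z‖ ≤ ‖z‖ := by
  have := dist_le_div_mul_dist_of_mapsTo_ball (R₂ := 1) hd (by rw [h0]; exact hm.mono_right ball_subset_closedBall) hz
  simpa [h0, Complex.dist_eq] using this

lemma mySchwarz' {f : ℂ → ℂ} (hd : DifferentiableOn ℂ f (ball (0:ℂ) 1))
    (hm : ∀ w ∈ ball (0:ℂ) 1, ‖f w‖ ≤ 1) (h0 : f 0 = 0) {z : ℂ}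
    (hz : z ∈ ball (0:ℂ) 1) : ‖f z‖ ≤ ‖z‖ := by
  have key : ∀ ε : ℝ, 0 < ε → ‖f z‖ ≤ (1 + ε) * ‖z‖ := by
    intro ε hε
    have hmm : MapsTo f (ball (0:ℂ) 1) (ball (f 0) (1 + ε)) := by
      intro w hw
      rw [h0, mem_ball, Complex.dist_eq, sub_zero]
      exact lt_of_le_of_lt (hm w hw) (by linarith)
    have := dist_le_div_mul_dist_of_mapsTo_ball hd (hmm.mono_right ball_subset_closedBall) hz
    simpa [h0, Complex.dist_eq] using this
  by_contra hc
  push_neg at hc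
  rcases eq_or_lt_of_le (norm_nonneg z) with hz0 | hz0
  · have := key 1 one_pos
    rw [← hz0, mul_zero] at this
    have := le_antisymm this (norm_nonneg _)
    rw [this, ← hz0] at hc
    exact lt_irrefl _ hc
  · set ε := (‖f z‖ - ‖z‖) / (2 * ‖z‖) with hεd
    have hε : 0 < ε := by
      apply div_pos (by linarith) (by linarith)
    have := key ε hε
    have : ‖f z‖ ≤ ‖z‖ + (‖f z‖ - ‖z‖)/2 := by
      rw [hεd] at this
      calc ‖f z‖ ≤ (1 + (‖f z‖ - ‖z‖) / (2 * ‖z‖)) * ‖z‖ := this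
        _ = ‖z‖ + (‖f z‖ - ‖z‖)/2 := by field_simp
    linarith

lemma myNormSqDeriv {c : ℝ → ℂ} {c' : ℂ} {t : ℝ} (hc : HasDerivAt c c' t) :
    HasDerivAt (fun s => Complex.normSq (c s)) (2 * ((c t).re * c'.re + (c t).im * c'.im)) t := by
  have hre : HasDerivAt (fun s => (c s).re) c'.re t :=
    Complex.reCLM.hasFDerivAt.comp_hasDerivAt t hc
  have him : HasDerivAt (fun s => (c s).im) c'.im t :=
    Complex.imCLM.hasFDerivAt.comp_hasDerivAt t hc
  have := (hre.mul hre).add (him.mul him)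
  simp only [Complex.normSq_apply]
  exact this.congr_deriv (by ring)

lemma myOneSided {f : ℝ → ℝ} {d : ℝ} (hf : HasDerivAt f d 1)
    (hle : ∀ t ∈ Ico (0:ℝ) 1, f t ≤ f 1) : 0 ≤ d := by
  have h1 : Tendsto (slope f 1) (𝓝[≠] 1) (𝓝 d) := hasDerivAt_iff_tendsto_slope.1 hf
  have h2 : Tendsto (slope f 1) (𝓝[Ioo (0:ℝ) 1] 1) (𝓝 d) :=
    h1.mono_left (nhdsWithin_mono _ (fun x hx => ne_of_lt hx.2))
  have hne : (𝓝[Ioo (0:ℝ) 1] (1:ℝ)).NeBot := right_nhdsWithin_Ioo_neBot one_pos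
  refine ge_of_tendsto h2 ?_
  filter_upwards [self_mem_nhdsWithin] with t ht
  have h3 : f t ≤ f 1 := hle t ⟨le_of_lt ht.1, ht.2⟩
  have h4 : t - 1 < 0 := by linarith [ht.2]
  rw [slope_def_field]
  exact div_nonneg_of_nonpos (by linarith) (by linarith)

lemma myRePos (h : ℂ → ℂ)
    (hd : DifferentiableOn ℂ h (ball (0:ℂ) 1)) (h0 : h 0 = 0)
    (hne : ∀ x ∈ ball (0:ℂ) 1, deriv h x ≠ 0)
    (hinj : Set.InjOn h (ball (0:ℂ) 1))
    (hstar : ∀ w ∈ h '' (ball (0:ℂ) 1), segment ℝ 0 w ⊆ h '' (ball (0:ℂ) 1)) :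
    ∀ x ∈ ball (0:ℂ) 1, x ≠ 0 → 0 ≤ (x * deriv h x / h x).re := by
  have hball : (0:ℂ) ∈ ball (0:ℂ) 1 := mem_ball_self one_pos
  have hH : AnalyticOnNhd ℂ h (ball (0:ℂ) 1) := hd.analyticOnNhd isOpen_ball
  have hstrict : ∀ x ∈ ball (0:ℂ) 1, HasStrictDerivAt h (deriv h x) x := by
    intro x hx
    obtain ⟨p, hp⟩ := hH x hx
    exact hp.deriv ▸ hp.hasStrictDerivAt
  set inv := Function.invFunOn h (ball (0:ℂ) 1) with hinvdef
  have hli : ∀ x ∈ ball (0:ℂ) 1, inv (h x) = x := fun x hx => hinj.leftInvOn_invFunOn hx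
  have hinvd : ∀ x ∈ ball (0:ℂ) 1, HasStrictDerivAt inv (deriv h x)⁻¹ (h x) := by
    intro x hx
    exact (hstrict x hx).to_local_left_inverse (hne x hx)
      (((isOpen_ball.eventually_mem hx)).mono hli)
  have hseg : ∀ x ∈ ball (0:ℂ) 1, ∀ t ∈ Icc (0:ℝ) 1,
      ∃ y ∈ ball (0:ℂ) 1, h y = (t:ℂ) * h x := by
    intro x hx t ht
    have hmem : (t:ℂ) * h x ∈ h '' (ball (0:ℂ) 1) := by
      apply hstar (h x) ⟨x, hx, rfl⟩
      rw [segment_eq_image ℝ (0:ℂ) (h x)]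
      exact ⟨t, ht, by simp [Complex.real_smul]⟩
    obtain ⟨y, hy, hyeq⟩ := hmem
    exact ⟨y, hy, hyeq⟩
  intro x hx hx0
  have hhx0 : h x ≠ 0 := by
    intro e
    exact hx0 (hinj hx hball (by rw [e, h0]))
  -- Schwarz piece
  have hW : ∀ t ∈ Icc (0:ℝ) 1, ‖inv ((t:ℂ) * h x)‖ ≤ ‖x‖ := by
    intro t ht
    have hdiff : DifferentiableOn ℂ (fun ζ => inv ((t:ℂ) * h ζ)) (ball (0:ℂ) 1) := by
      intro ζ hζ
      obtain ⟨y, hy, hyeq⟩ := hseg ζ hζ t ht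
      have h1 : DifferentiableAt ℂ inv ((t:ℂ) * h ζ) := by
        rw [← hyeq]; exact (hinvd y hy).hasDerivAt.differentiableAt
      have h2 : DifferentiableAt ℂ (fun ζ => (t:ℂ) * h ζ) ζ :=
        (hd.differentiableAt (isOpen_ball.mem_nhds hζ)).const_mul _
      exact (h1.comp ζ h2).differentiableWithinAt
    have hmaps : MapsTo (fun ζ => inv ((t:ℂ) * h ζ)) (ball (0:ℂ) 1) (ball (0:ℂ) 1) := by
      intro ζ hζ
      obtain ⟨y, hy, hyeq⟩ := hseg ζ hζ t ht
      simp only [← hyeq, hli y hy]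
      exact hy
    have h00 : inv ((t:ℂ) * h 0) = 0 := by
      have he : (t:ℂ) * h 0 = h 0 := by rw [h0, mul_zero]
      rw [he, hli 0 hball]
    exact mySchwarz hdiff hmaps h00 hx
  set φ : ℝ → ℝ := fun t => Complex.normSq (inv ((t:ℂ) * h x)) with hφdef
  have hφ1 : φ 1 = Complex.normSq x := by
    simp only [hφdef, Complex.ofReal_one, one_mul, hli x hx]
  have hφle : ∀ t ∈ Ico (0:ℝ) 1, φ t ≤ φ 1 := by
    intro t ht
    rw [hφ1]
    have := hW t ⟨ht.1, le_of_lt ht.2⟩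
    rw [hφdef]
    simp only [← Complex.sq_norm]
    exact pow_le_pow_left₀ (norm_nonneg _) this 2
  have hm : HasDerivAt (fun t : ℝ => (t:ℂ) * h x) (h x) 1 := by
    simpa using (Complex.ofRealCLM.hasDerivAt (x := (1:ℝ))).mul_const (h x)
  have hinv1 : HasDerivAt inv (deriv h x)⁻¹ ((1:ℝ) * h x : ℂ) := by
    rw [Complex.ofReal_one, one_mul]
    exact (hinvd x hx).hasDerivAt
  have hc : HasDerivAt (fun t : ℝ => inv ((t:ℂ) * h x)) (h x • (deriv h x)⁻¹) 1 :=
    by have := HasDerivAt.scomp 1 hinv1 hm; exact this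
  have hφd := myNormSqDeriv hc
  have hD := myOneSided hφd hφle
  -- now algebra
  have hc1 : inv (((1:ℝ):ℂ) * h x) = x := by
    rw [Complex.ofReal_one, one_mul, hli x hx]
  rw [hc1] at hD
  set w := x * deriv h x / h x with hwdef
  have hw0 : w ≠ 0 := by
    rw [hwdef]
    exact div_ne_zero (mul_ne_zero hx0 (hne x hx)) hhx0
  have hkey : (starRingEnd ℂ) x * (h x • (deriv h x)⁻¹) = ((Complex.normSq x : ℝ) : ℂ) * w⁻¹ := by
    rw [smul_eq_mul, hwdef]
    rw [← Complex.mul_conj]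
    field_simp [hne x hx, hhx0]
  have hE : 0 ≤ ((starRingEnd ℂ) x * (h x • (deriv h x)⁻¹)).re := by
    have : ((starRingEnd ℂ) x * (h x • (deriv h x)⁻¹)).re
        = x.re * (h x • (deriv h x)⁻¹).re + x.im * (h x • (deriv h x)⁻¹).im := by
      simp [Complex.mul_re]
    rw [this]
    linarith [hD]
  rw [hkey] at hE
  rw [Complex.re_ofReal_mul, Complex.inv_re] at hE
  have hnsw : 0 < Complex.normSq w := Complex.normSq_pos.2 hw0
  have hnsx : 0 < Complex.normSq x := Complex.normSq_pos.2 hx0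
  have h5 : 0 ≤ w.re / Complex.normSq w := nonneg_of_mul_nonneg_right ?_ hnsx
  · have := mul_nonneg h5 (le_of_lt hnsw)
    rwa [div_mul_cancel₀ _ (ne_of_gt hnsw)] at this
  · linarith [hE]

lemma myKne (h : ℂ → ℂ) (h0 : h 0 = 0) (h1 : deriv h 0 = 1)
    (hinj : Set.InjOn h (ball (0:ℂ) 1)) :
    ∀ x ∈ ball (0:ℂ) 1, dslope h 0 x ≠ 0 := by
  intro x hx
  rcases eq_or_ne x 0 with rfl | hx0
  · rw [dslope_same, h1]; exact one_ne_zero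
  · rw [dslope_of_ne _ hx0, slope_def_field]
    have hhx0 : h x ≠ 0 := by
      intro e
      exact hx0 (hinj hx (mem_ball_self one_pos) (by rw [e, h0]))
    simp [h0]
    exact ⟨hhx0, hx0⟩

lemma myKd (h : ℂ → ℂ) (hd : DifferentiableOn ℂ h (ball (0:ℂ) 1)) :
    DifferentiableOn ℂ (dslope h 0) (ball (0:ℂ) 1) := by
  have hH : AnalyticOnNhd ℂ h (ball (0:ℂ) 1) := hd.analyticOnNhd isOpen_ball
  intro x hx
  rcases eq_or_ne x 0 with rfl | hx0
  · obtain ⟨p, hp⟩ := hH 0 hx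
    exact (hp.has_fpower_series_dslope_fslope.analyticAt).differentiableAt.differentiableWithinAt
  · exact (differentiableWithinAt_dslope_of_ne hx0).2 (hd x hx)

lemma myRePos' (h : ℂ → ℂ)
    (hd : DifferentiableOn ℂ h (ball (0:ℂ) 1)) (h0 : h 0 = 0) (h1 : deriv h 0 = 1)
    (hne : ∀ x ∈ ball (0:ℂ) 1, deriv h x ≠ 0)
    (hinj : Set.InjOn h (ball (0:ℂ) 1))
    (hstar : ∀ w ∈ h '' (ball (0:ℂ) 1), segment ℝ 0 w ⊆ h '' (ball (0:ℂ) 1)) :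
    ∀ x ∈ ball (0:ℂ) 1, 0 ≤ (deriv h x / dslope h 0 x).re := by
  intro x hx
  rcases eq_or_ne x 0 with rfl | hx0
  · rw [dslope_same, h1]
    norm_num
  · have he : deriv h x / dslope h 0 x = x * deriv h x / h x := by
      rw [dslope_of_ne _ hx0, slope_def_field, h0, sub_zero, sub_zero]
      have hhx0 : h x ≠ 0 := by
        intro e
        exact hx0 (hinj hx (mem_ball_self one_pos) (by rw [e, h0]))
      field_simp
    rw [he]
    exact myRePos h hd h0 hne hinj hstar x hx hx0

lemma myPBound (h : ℂ → ℂ)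
    (hd : DifferentiableOn ℂ h (ball (0:ℂ) 1)) (h0 : h 0 = 0) (h1 : deriv h 0 = 1)
    (hne : ∀ x ∈ ball (0:ℂ) 1, deriv h x ≠ 0)
    (hinj : Set.InjOn h (ball (0:ℂ) 1))
    (hstar : ∀ w ∈ h '' (ball (0:ℂ) 1), segment ℝ 0 w ⊆ h '' (ball (0:ℂ) 1)) :
    ∀ x ∈ ball (0:ℂ) 1,
      ‖deriv h x / dslope h 0 x - 1‖
        ≤ ‖x‖ * ‖deriv h x / dslope h 0 x + 1‖ := by
  have hH : AnalyticOnNhd ℂ h (ball (0:ℂ) 1) := hd.analyticOnNhd isOpen_ball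
  set p : ℂ → ℂ := fun x => deriv h x / dslope h 0 x with hpdef
  have hRe := myRePos' h hd h0 h1 hne hinj hstar
  have hpd : DifferentiableOn ℂ p (ball (0:ℂ) 1) :=
    ((hH.deriv.differentiableOn)).div (myKd h hd) (myKne h h0 h1 hinj)
  have hp0 : p 0 = 1 := by
    rw [hpdef]; simp only [dslope_same, h1]; norm_num
  have hq1ne : ∀ x ∈ ball (0:ℂ) 1, p x + 1 ≠ 0 := by
    intro x hx e
    have := congrArg Complex.re e
    simp only [Complex.add_re, Complex.one_re, Complex.zero_re] at this
    have := hRe x hx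
    rw [hpdef] at *
    simp only at *
    linarith
  set q : ℂ → ℂ := fun x => (p x - 1) / (p x + 1) with hqdef
  have hqd : DifferentiableOn ℂ q (ball (0:ℂ) 1) :=
    (hpd.sub (differentiableOn_const 1)).div (hpd.add (differentiableOn_const 1)) hq1ne
  have habs : ∀ x ∈ ball (0:ℂ) 1, ‖p x - 1‖ ≤ ‖p x + 1‖ := by
    intro x hx
    have hre := hRe x hx
    rw [Complex.norm_def, Complex.norm_def]
    apply Real.sqrt_le_sqrt
    simp only [Complex.normSq_apply, Complex.sub_re, Complex.sub_im, Complex.add_re,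
      Complex.add_im, Complex.one_re, Complex.one_im]
    have : 0 ≤ (p x).re := hre
    nlinarith [this]
  have hqle : ∀ x ∈ ball (0:ℂ) 1, ‖q x‖ ≤ 1 := by
    intro x hx
    rw [hqdef]
    simp only [norm_div]
    have h2 : 0 < ‖p x + 1‖ := by
      simp only [norm_pos_iff]
      exact hq1ne x hx
    exact div_le_one_of_le₀ (habs x hx) (le_of_lt h2)
  have hq0 : q 0 = 0 := by
    rw [hqdef]; simp only [hp0]; norm_num
  intro x hx
  have := mySchwarz' hqd hqle hq0 hx
  rw [hqdef] at this
  simp only [norm_div] at this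
  have h2 : 0 < ‖p x + 1‖ := by
    simp only [norm_pos_iff]
    exact hq1ne x hx
  rw [div_le_iff₀ h2] at this
  rw [hpdef] at this
  simpa [mul_comm] using this

lemma myGrowth (h : ℂ → ℂ)
    (hd : DifferentiableOn ℂ h (ball (0:ℂ) 1)) (h0 : h 0 = 0) (h1 : deriv h 0 = 1)
    (hne : ∀ x ∈ ball (0:ℂ) 1, deriv h x ≠ 0)
    (hinj : Set.InjOn h (ball (0:ℂ) 1))
    (hstar : ∀ w ∈ h '' (ball (0:ℂ) 1), segment ℝ 0 w ⊆ h '' (ball (0:ℂ) 1)) :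
    ∀ z ∈ ball (0:ℂ) 1, ‖dslope h 0 z‖ ≤ ((1 - ‖z‖)⁻¹) ^ 2 := by
  intro z hz
  rcases eq_or_ne z 0 with rfl | hz0
  · simp [dslope_same, h1]
  set r := ‖z‖ with hrdef
  have hr0 : 0 < r := norm_pos_iff.mpr hz0
  have hr1 : r < 1 := by simpa [Complex.dist_eq] using hz
  set k := dslope h 0 with hkdef
  have hK : AnalyticOnNhd ℂ k (ball (0:ℂ) 1) := (myKd h hd).analyticOnNhd isOpen_ball
  have hkne := myKne h h0 h1 hinj
  have hmem : ∀ t ∈ Icc (0:ℝ) 1, (t:ℂ) * z ∈ ball (0:ℂ) 1 := by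
    intro t ht
    rw [mem_ball, Complex.dist_eq, sub_zero, norm_mul, Complex.norm_real, Real.norm_eq_abs,
      _root_.abs_of_nonneg ht.1]
    calc t * r ≤ 1 * r := by nlinarith [ht.2, hr0]
      _ < 1 := by linarith
  set c : ℝ → ℂ := fun t => k ((t:ℂ) * z) with hcdef
  have hcd : ∀ t ∈ Icc (0:ℝ) 1, HasDerivAt c (z * deriv k ((t:ℂ) * z)) t := by
    intro t ht
    have hm : HasDerivAt (fun s : ℝ => (s:ℂ) * z) z t := by
      simpa using (Complex.ofRealCLM.hasDerivAt (x := t)).mul_const z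
    have hk' : HasDerivAt k (deriv k ((t:ℂ) * z)) ((t:ℂ) * z) :=
      ((hK _ (hmem t ht)).differentiableAt).hasDerivAt
    have := HasDerivAt.scomp t hk' hm
    simp only [smul_eq_mul] at this
    exact this
  have hcne : ∀ t ∈ Icc (0:ℝ) 1, c t ≠ 0 := fun t ht => hkne _ (hmem t ht)
  set u : ℝ → ℝ := fun t => Real.log (Complex.normSq (c t)) with hudef
  have hud : ∀ t ∈ Icc (0:ℝ) 1, HasDerivAt u
      ((Complex.normSq (c t))⁻¹ * (2 * ((c t).re * (z * deriv k ((t:ℂ) * z)).re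
        + (c t).im * (z * deriv k ((t:ℂ) * z)).im))) t := by
    intro t ht
    have hnz : Complex.normSq (c t) ≠ 0 := (Complex.normSq_pos.2 (hcne t ht)).ne'
    exact (Real.hasDerivAt_log hnz).comp t (myNormSqDeriv (hcd t ht))
  set v : ℝ → ℝ := fun t => -4 * Real.log (1 - t * r) with hvdef
  have hvd : ∀ t ∈ Icc (0:ℝ) 1, HasDerivAt v (4 * r / (1 - t * r)) t := by
    intro t ht
    have htr : t * r < 1 := by nlinarith [ht.1, ht.2]
    have hnz : 1 - t * r ≠ 0 := by linarith
    have hin : HasDerivAt (fun t : ℝ => 1 - t * r) (-r) t := by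
      simpa using ((hasDerivAt_id t).mul_const r).const_sub 1
    have := ((Real.hasDerivAt_log hnz).comp t hin).const_mul (-4 : ℝ)
    exact this.congr_deriv (by ring)
  -- derivative bound on the interior
  have hbound : ∀ t ∈ Ioo (0:ℝ) 1,
      (Complex.normSq (c t))⁻¹ * (2 * ((c t).re * (z * deriv k ((t:ℂ) * z)).re
        + (c t).im * (z * deriv k ((t:ℂ) * z)).im)) ≤ 4 * r / (1 - t * r) := by
    intro t ht
    have htIcc : t ∈ Icc (0:ℝ) 1 := ⟨le_of_lt ht.1, le_of_lt ht.2⟩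
    set ζ := (t:ℂ) * z with hζdef
    have hζmem : ζ ∈ ball (0:ℂ) 1 := hmem t htIcc
    have hζ0 : ζ ≠ 0 := mul_ne_zero (by exact_mod_cast ne_of_gt ht.1) hz0
    have hζabs : ‖ζ‖ = t * r := by
      rw [hζdef, norm_mul, Complex.norm_real, Real.norm_eq_abs, _root_.abs_of_nonneg (le_of_lt ht.1)]
    have htr : t * r < 1 := by nlinarith [ht.2]
    -- identify z * deriv k ζ / k ζ with (p ζ - 1)/t
    have hderiv_k : deriv k ζ = deriv h ζ * ζ⁻¹ + h ζ * (-(ζ ^ 2)⁻¹) := by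
      have hloc : ∀ᶠ w in nhds ζ, k w = h w * w⁻¹ := by
        filter_upwards [isOpen_ne.eventually_mem hζ0] with w hw
        rw [hkdef, dslope_of_ne _ hw, slope_def_field, h0, sub_zero, sub_zero, div_eq_mul_inv]
      have hder : HasDerivAt (fun w => h w * w⁻¹) (deriv h ζ * ζ⁻¹ + h ζ * (-(ζ ^ 2)⁻¹)) ζ :=
        (hd.differentiableAt (isOpen_ball.mem_nhds hζmem)).hasDerivAt.mul (hasDerivAt_inv hζ0)
      exact (hder.congr_of_eventuallyEq hloc).deriv
    have hkζ : k ζ = h ζ / ζ := by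
      rw [hkdef, dslope_of_ne _ hζ0, slope_def_field, h0, sub_zero, sub_zero]
    have hhζ0 : h ζ ≠ 0 := by
      intro e
      exact hζ0 (hinj hζmem (mem_ball_self one_pos) (by rw [e, h0]))
    have hckey : z * deriv k ζ / k ζ = (deriv h ζ / k ζ - 1) / (t : ℝ) := by
      rw [hderiv_k, hkζ]
      have ht0 : (t:ℂ) ≠ 0 := by exact_mod_cast ne_of_gt ht.1
      field_simp
      ring_nf
      rw [hζdef]; ring
    -- abs bound via myPBound
    have hPB := myPBound h hd h0 h1 hne hinj hstar ζ hζmem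
    set A := ‖deriv h ζ / k ζ - 1‖ with hAdef
    have hA1 : ‖deriv h ζ / k ζ + 1‖ ≤ A + 2 := by
      calc ‖deriv h ζ / k ζ + 1‖
          = ‖(deriv h ζ / k ζ - 1) + 2‖ := by ring_nf
        _ ≤ A + ‖(2:ℂ)‖ := norm_add_le _ _
        _ = A + 2 := by norm_num
    have hA2 : A ≤ t * r * (A + 2) := by
      calc A ≤ ‖ζ‖ * ‖deriv h ζ / k ζ + 1‖ := hPB
        _ = t * r * ‖deriv h ζ / k ζ + 1‖ := by rw [hζabs]
        _ ≤ t * r * (A + 2) := by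
            apply mul_le_mul_of_nonneg_left hA1
            exact mul_nonneg (le_of_lt ht.1) (le_of_lt hr0)
    have hA3 : A ≤ 2 * (t * r) / (1 - t * r) := by
      rw [le_div_iff₀ (by linarith)]
      nlinarith [hA2]
    -- now the real-part inequality
    have hdivre : (Complex.normSq (c t))⁻¹ * (2 * ((c t).re * (z * deriv k ζ).re
        + (c t).im * (z * deriv k ζ).im)) = 2 * (z * deriv k ζ / c t).re := by
      rw [Complex.div_re]
      field_simp [(Complex.normSq_pos.2 (hcne t htIcc)).ne']
    rw [hdivre]
    have hle1 : (z * deriv k ζ / c t).re ≤ ‖z * deriv k ζ / c t‖ :=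
      Complex.re_le_norm _
    have hct : c t = k ζ := rfl
    have habsval : ‖z * deriv k ζ / c t‖ = A / t := by
      rw [hct, hckey, hAdef, norm_div, Complex.norm_real, Real.norm_eq_abs, _root_.abs_of_nonneg (le_of_lt ht.1)]
    have : A / t ≤ 2 * r / (1 - t * r) := by
      rw [div_le_div_iff₀ ht.1 (by linarith)]
      calc A * (1 - t * r) ≤ 2 * (t * r) / (1 - t * r) * (1 - t * r) := by
            apply mul_le_mul_of_nonneg_right hA3 (by linarith)
        _ = 2 * (t * r) := by rw [div_mul_cancel₀ _ (by linarith : (1:ℝ) - t*r ≠ 0)]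
        _ = 2 * r * t := by ring
    calc 2 * (z * deriv k ζ / c t).re ≤ 2 * (A / t) := by
          rw [← habsval]; linarith [hle1, habsval ▸ hle1]
      _ ≤ 2 * (2 * r / (1 - t * r)) := by linarith
      _ = 4 * r / (1 - t * r) := by ring
  -- monotone comparison
  set F : ℝ → ℝ := fun t => u t - v t with hFdef
  have hFd : ∀ t ∈ Icc (0:ℝ) 1, HasDerivAt F
      ((Complex.normSq (c t))⁻¹ * (2 * ((c t).re * (z * deriv k ((t:ℂ) * z)).re
        + (c t).im * (z * deriv k ((t:ℂ) * z)).im)) - 4 * r / (1 - t * r)) t :=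
    fun t ht => (hud t ht).sub (hvd t ht)
  have hFc : ContinuousOn F (Icc (0:ℝ) 1) :=
    fun t ht => ((hFd t ht).continuousAt).continuousWithinAt
  have hFdiff : DifferentiableOn ℝ F (interior (Icc (0:ℝ) 1)) := by
    rw [interior_Icc]
    intro t ht
    exact ((hFd t ⟨le_of_lt ht.1, le_of_lt ht.2⟩).differentiableAt).differentiableWithinAt
  have hFderiv : ∀ t ∈ interior (Icc (0:ℝ) 1), deriv F t ≤ 0 := by
    rw [interior_Icc]
    intro t ht
    rw [(hFd t ⟨le_of_lt ht.1, le_of_lt ht.2⟩).deriv]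
    linarith [hbound t ht]
  have hanti : AntitoneOn F (Icc (0:ℝ) 1) :=
    antitoneOn_of_deriv_nonpos (convex_Icc 0 1) hFc hFdiff hFderiv
  have hF10 : F 1 ≤ F 0 :=
    hanti (left_mem_Icc.2 zero_le_one) (right_mem_Icc.2 zero_le_one) zero_le_one
  have hc0 : c 0 = 1 := by
    show k (((0:ℝ):ℂ) * z) = 1
    rw [Complex.ofReal_zero, zero_mul, hkdef, dslope_same, h1]
  have hc1 : c 1 = k z := by
    show k (((1:ℝ):ℂ) * z) = k z
    rw [Complex.ofReal_one, one_mul]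
  have hF0 : F 0 = 0 := by
    simp only [hFdef, hudef, hvdef, hc0]
    norm_num
  have hF1 : F 1 = Real.log (Complex.normSq (k z)) + 4 * Real.log (1 - r) := by
    simp only [hFdef, hudef, hvdef, hc1]
    ring_nf
  have hlog : Real.log (Complex.normSq (k z)) ≤ Real.log (((1 - r)⁻¹) ^ 4) := by
    rw [Real.log_pow, Real.log_inv]
    rw [hF1] at hF10
    rw [hF0] at hF10
    push_cast
    linarith
  have hnsqpos : 0 < Complex.normSq (k z) := Complex.normSq_pos.2 (hkne z hz)
  have hrhspos : (0:ℝ) < ((1 - r)⁻¹) ^ 4 := pow_pos (inv_pos.2 (by linarith)) 4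
  have h2 : Complex.normSq (k z) ≤ ((1 - r)⁻¹) ^ 4 :=
    (Real.log_le_log_iff hnsqpos hrhspos).1 hlog
  have h3 : (‖k z‖) ^ 2 ≤ (((1 - r)⁻¹) ^ 2) ^ 2 := by
    rw [Complex.sq_norm]
    calc Complex.normSq (k z) ≤ ((1 - r)⁻¹) ^ 4 := h2
      _ = (((1 - r)⁻¹) ^ 2) ^ 2 := by ring
  calc ‖k z‖ = Real.sqrt ((‖k z‖) ^ 2) :=
        (Real.sqrt_sq (norm_nonneg _)).symm
    _ ≤ Real.sqrt ((((1 - r)⁻¹) ^ 2) ^ 2) := Real.sqrt_le_sqrt h3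
    _ = ((1 - r)⁻¹) ^ 2 := Real.sqrt_sq (by positivity)

lemma myDistortion (h : ℂ → ℂ)
    (hd : DifferentiableOn ℂ h (ball (0:ℂ) 1)) (h0 : h 0 = 0) (h1 : deriv h 0 = 1)
    (hne : ∀ x ∈ ball (0:ℂ) 1, deriv h x ≠ 0)
    (hinj : Set.InjOn h (ball (0:ℂ) 1))
    (hstar : ∀ w ∈ h '' (ball (0:ℂ) 1), segment ℝ 0 w ⊆ h '' (ball (0:ℂ) 1)) :
    ∀ z ∈ ball (0:ℂ) 1,
      ‖deriv h z‖ ≤ (1 + ‖z‖) / (1 - ‖z‖) ^ 3 := by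
  intro z hz
  set r := ‖z‖ with hrdef
  have hr0 : 0 ≤ r := norm_nonneg z
  have hr1 : r < 1 := by simpa [Complex.dist_eq] using hz
  set P := ‖deriv h z / dslope h 0 z‖ with hPdef
  have hPB := myPBound h hd h0 h1 hne hinj hstar z hz
  have h1' : ‖deriv h z / dslope h 0 z + 1‖ ≤ P + 1 := by
    calc ‖deriv h z / dslope h 0 z + 1‖
        ≤ P + ‖(1:ℂ)‖ := norm_add_le _ _
      _ = P + 1 := by norm_num
  have h2' : P ≤ ‖deriv h z / dslope h 0 z - 1‖ + 1 := by
    calc P = ‖(deriv h z / dslope h 0 z - 1) + 1‖ := by rw [sub_add_cancel]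
      _ ≤ ‖deriv h z / dslope h 0 z - 1‖ + ‖(1:ℂ)‖ := norm_add_le _ _
      _ = ‖deriv h z / dslope h 0 z - 1‖ + 1 := by norm_num
  have hP : P ≤ (1 + r) / (1 - r) := by
    rw [le_div_iff₀ (by linarith)]
    nlinarith [hPB, h1', h2', norm_nonneg (deriv h z / dslope h 0 z + 1)]
  have hG := myGrowth h hd h0 h1 hne hinj hstar z hz
  have hfact : deriv h z = (deriv h z / dslope h 0 z) * dslope h 0 z := by
    field_simp [myKne h h0 h1 hinj z hz]
  calc ‖deriv h z‖ = P * ‖dslope h 0 z‖ := by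
        rw [hfact, norm_mul]
    _ ≤ ((1 + r) / (1 - r)) * ((1 - r)⁻¹) ^ 2 := by
        apply mul_le_mul hP hG (norm_nonneg _)
        exact div_nonneg (by linarith) (by linarith)
    _ = (1 + r) / (1 - r) ^ 3 := by
        have hne1 : (1:ℝ) - r ≠ 0 := by linarith
        field_simp
lemma myMoebiusId (a w : ℂ) :
    Complex.normSq (1 - (starRingEnd ℂ) a * w) - Complex.normSq (a - w)
      = (1 - Complex.normSq a) * (1 - Complex.normSq w) := by
  simp only [Complex.normSq_apply, Complex.sub_re, Complex.sub_im, Complex.mul_re,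
    Complex.mul_im, Complex.one_re, Complex.one_im, Complex.conj_re, Complex.conj_im]
  ring

lemma myNormSqSub (a w : ℂ) :
    Complex.normSq (a - w) = Complex.normSq a + Complex.normSq w
      - 2 * ((starRingEnd ℂ) a * w).re := by
  simp only [Complex.normSq_apply, Complex.sub_re, Complex.sub_im, Complex.mul_re,
    Complex.mul_im, Complex.conj_re, Complex.conj_im]
  ring

lemma myNormSqOneSub (a w : ℂ) :
    Complex.normSq (1 - (starRingEnd ℂ) a * w) = 1 + Complex.normSq a * Complex.normSq w
      - 2 * ((starRingEnd ℂ) a * w).re := by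
  simp only [Complex.normSq_apply, Complex.sub_re, Complex.sub_im, Complex.mul_re,
    Complex.mul_im, Complex.one_re, Complex.one_im, Complex.conj_re, Complex.conj_im]
  ring

lemma myQuadOfNormSq {α r s X : ℝ} (hr1 : r < 1) (hr0 : 0 ≤ r) (hX : X ≤ α * s)
    (hnsq : α^2 + s^2 - 2*X ≤ r^2 * (1 + α^2*s^2 - 2*X)) :
    (1 - α^2*r^2)*s^2 - 2*α*(1-r^2)*s + (α^2 - r^2) ≤ 0 := by
  have hhint : 2*(1-r^2)*X ≤ 2*(1-r^2)*(α*s) := by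
    apply mul_le_mul_of_nonneg_left hX
    nlinarith
  nlinarith [hnsq, hhint]

lemma myQuadSolve {α r s : ℝ} (hα0 : 0 ≤ α) (hα1 : α < 1) (hr0 : 0 ≤ r) (hr1 : r < 1)
    (hs0 : 0 ≤ s) (hαr1 : 0 < 1 - α*r)
    (hq2 : (1 - α^2*r^2)*s^2 - 2*α*(1-r^2)*s + (α^2 - r^2) ≤ 0) :
    α - r ≤ (1 - α*r) * s := by
  by_contra hc
  push_neg at hc
  have hcmp : (α - r) * (1 + α*r) ≤ (α + r) * (1 - α*r) := by
    nlinarith [mul_nonneg hr0 (by nlinarith : (0:ℝ) ≤ 1 - α^2)]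
  have hstep1 : (1 - α*r)*s*(1 + α*r) < (α - r)*(1 + α*r) :=
    mul_lt_mul_of_pos_right hc (by nlinarith)
  have hf2 : (1 + α*r)*s < α + r := by
    have h3 : ((1 + α*r)*s)*(1 - α*r) < (α + r)*(1 - α*r) := by nlinarith [hstep1, hcmp]
    exact lt_of_mul_lt_mul_right (by nlinarith [h3]) (le_of_lt hαr1)
  have hP : 0 < (α - r) - (1 - α*r)*s := by linarith
  have hQ : 0 < (α + r) - (1 + α*r)*s := by linarith
  nlinarith [mul_pos hP hQ, hq2]

lemma myFinal {α r s A B : ℝ} (hα0 : 0 ≤ α) (hα1 : α < 1) (hr0 : 0 ≤ r) (hr1 : r < 1)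
    (hs0 : 0 ≤ s) (hs1 : s < 1) (hA0 : 0 < A)
    (hdist : A ≤ (1+r)/(1-r)^3) (hBsA : B = s*A)
    (hslb : α - r ≤ (1 - α*r)*s) (hαr1 : 0 < 1 - α*r) (hrα : r < α) :
    A^2 - B^2 ≤ (1 - α^2)*(1+r)^3/((1-α*r)^2*(1-r)^5) := by
  have h4 : (α - r)^2 ≤ ((1 - α*r)*s)^2 := pow_le_pow_left₀ (by linarith) hslb 2
  have h1s : (1 - s^2) ≤ (1 - α^2) * (1 - r^2) / (1 - α*r)^2 := by
    rw [le_div_iff₀ (pow_pos hαr1 2)]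
    nlinarith [h4]
  have hC2 : A^2 ≤ ((1+r)/(1-r)^3)^2 := pow_le_pow_left₀ (le_of_lt hA0) hdist 2
  have hfin : A^2 - B^2 = A^2 * (1 - s^2) := by rw [hBsA]; ring
  rw [hfin]
  have hs2le : 0 ≤ 1 - s^2 := by nlinarith
  calc A^2 * (1 - s^2) ≤ ((1+r)/(1-r)^3)^2 * (1 - s^2) :=
        mul_le_mul_of_nonneg_right hC2 hs2le
    _ ≤ ((1+r)/(1-r)^3)^2 * ((1 - α^2) * (1 - r^2) / (1 - α*r)^2) := by
        apply mul_le_mul_of_nonneg_left h1s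
        positivity
    _ = (1 - α^2)*(1+r)^3/((1-α*r)^2*(1-r)^5) := by
        have hne1 : (1:ℝ) - r ≠ 0 := by linarith
        have hne2 : (1:ℝ) - α*r ≠ 0 := ne_of_gt hαr1
        field_simp
        ring

theorem stmt11
    (h g : ℂ → ℂ) (α : ℝ) (hα : α ∈ Set.Ico (0:ℝ) 1)
    (hd : DifferentiableOn ℂ h (Metric.ball (0:ℂ) 1))
    (gd : DifferentiableOn ℂ g (Metric.ball (0:ℂ) 1))
    (h0 : h 0 = 0) (h1 : deriv h 0 = 1) (g0 : g 0 = 0)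
    (hb1 : ‖deriv g 0‖ = α)
    (hsp : ∀ z ∈ Metric.ball (0:ℂ) 1, ‖deriv g z‖ < ‖deriv h z‖)
    (hinj : Set.InjOn h (Metric.ball (0:ℂ) 1))
    (hstar : ∀ w ∈ h '' (Metric.ball (0:ℂ) 1), segment ℝ 0 w ⊆ h '' (Metric.ball (0:ℂ) 1))
 :
    ∀ z ∈ Metric.ball (0:ℂ) 1,
      (‖z‖ < α →
        ‖deriv h z‖ ^ 2 - ‖deriv g z‖ ^ 2
          ≤ (1 - α ^ 2) * (1 + ‖z‖) ^ 3 / ((1 - α * ‖z‖) ^ 2 * (1 - ‖z‖) ^ 5)) ∧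
      (α ≤ ‖z‖ →
        ‖deriv h z‖ ^ 2 - ‖deriv g z‖ ^ 2
          ≤ (1 + ‖z‖) ^ 2 / (1 - ‖z‖) ^ 6) := by
  obtain ⟨hα0, hα1⟩ := hα
  have hne : ∀ x ∈ ball (0:ℂ) 1, deriv h x ≠ 0 := by
    intro x hx e
    have := hsp x hx
    rw [e] at this
    simp at this
    exact absurd this (not_lt.2 (norm_nonneg _))
  intro z hz
  set r := ‖z‖ with hrdef
  have hr0 : 0 ≤ r := norm_nonneg z
  have hr1 : r < 1 := by simpa [Complex.dist_eq] using hz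
  set A := ‖deriv h z‖ with hAdef
  set B := ‖deriv g z‖ with hBdef
  have hBA : B < A := hsp z hz
  have hB0 : 0 ≤ B := norm_nonneg _
  have hA0 : 0 < A := lt_of_le_of_lt hB0 hBA
  have hdist : A ≤ (1 + r) / (1 - r) ^ 3 :=
    myDistortion h hd h0 h1 hne hinj hstar z hz
  have hA2 : A ^ 2 ≤ (1 + r) ^ 2 / (1 - r) ^ 6 := by
    have := pow_le_pow_left₀ (le_of_lt hA0) hdist 2
    calc A ^ 2 ≤ ((1 + r) / (1 - r) ^ 3) ^ 2 := this
      _ = (1 + r) ^ 2 / (1 - r) ^ 6 := by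
          rw [div_pow, ← pow_mul]
  constructor
  · -- case |z| < α
    intro hzα
    have hα0' : 0 < α := lt_of_le_of_lt hr0 hzα
    -- Schwarz-Pick lower bound for ω = g'/h'
    have hH : AnalyticOnNhd ℂ h (ball (0:ℂ) 1) := hd.analyticOnNhd isOpen_ball
    have hG : AnalyticOnNhd ℂ g (ball (0:ℂ) 1) := gd.analyticOnNhd isOpen_ball
    set ω : ℂ → ℂ := fun ζ => deriv g ζ / deriv h ζ with hωdef
    have hωd : DifferentiableOn ℂ ω (ball (0:ℂ) 1) :=
      (hG.deriv.differentiableOn).div (hH.deriv.differentiableOn) hne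
    have hωlt : ∀ ζ ∈ ball (0:ℂ) 1, ‖ω ζ‖ < 1 := by
      intro ζ hζ
      rw [hωdef]
      simp only [norm_div]
      rw [div_lt_one (lt_of_le_of_lt (norm_nonneg _) (hsp ζ hζ))]
      exact hsp ζ hζ
    set a := ω 0 with hadef
    have hball0 : (0:ℂ) ∈ ball (0:ℂ) 1 := mem_ball_self one_pos
    have haα : ‖a‖ = α := by
      rw [hadef, hωdef]
      simp only [h1, div_one]
      exact hb1
    have hden : ∀ ζ ∈ ball (0:ℂ) 1, 1 - (starRingEnd ℂ) a * ω ζ ≠ 0 := by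
      intro ζ hζ e
      have he : (starRingEnd ℂ) a * ω ζ = 1 := by
        have := sub_eq_zero.1 e
        exact this.symm
      have := congrArg (‖·‖) he
      rw [norm_mul, norm_one, Complex.norm_conj, haα] at this
      nlinarith [hωlt ζ hζ, norm_nonneg (ω ζ)]
    set ψ : ℂ → ℂ := fun ζ => (a - ω ζ) / (1 - (starRingEnd ℂ) a * ω ζ) with hψdef
    have hψd : DifferentiableOn ℂ ψ (ball (0:ℂ) 1) :=
      ((differentiableOn_const a).sub hωd).div
        ((differentiableOn_const 1).sub ((differentiableOn_const _).mul hωd)) hden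
    have hψmaps : MapsTo ψ (ball (0:ℂ) 1) (ball (0:ℂ) 1) := by
      intro ζ hζ
      rw [mem_ball, Complex.dist_eq, sub_zero, hψdef]
      simp only [norm_div]
      rw [div_lt_one (norm_pos_iff.mpr (hden ζ hζ))]
      have hkey := myMoebiusId a (ω ζ)
      have h1lt : Complex.normSq a < 1 := by
        rw [← Complex.sq_norm, haα]; nlinarith
      have h2lt : Complex.normSq (ω ζ) < 1 := by
        rw [← Complex.sq_norm]
        nlinarith [hωlt ζ hζ, norm_nonneg (ω ζ)]
      have hsq : Complex.normSq (a - ω ζ) < Complex.normSq (1 - (starRingEnd ℂ) a * ω ζ) := by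
        nlinarith [hkey]
      rw [Complex.norm_def, Complex.norm_def]
      exact Real.sqrt_lt_sqrt (Complex.normSq_nonneg _) hsq
    have hψ0 : ψ 0 = 0 := by
      rw [hψdef]
      simp [hadef]
    have hSP := mySchwarz hψd hψmaps hψ0 hz
    -- turn into normSq inequality
    rw [hψdef] at hSP
    simp only [norm_div] at hSP
    rw [div_le_iff₀ (norm_pos_iff.mpr (hden z hz))] at hSP
    set s := ‖ω z‖ with hsdef
    have hs0 : 0 ≤ s := norm_nonneg _
    have hs1 : s < 1 := hωlt z hz
    set X := ((starRingEnd ℂ) a * ω z).re with hXdef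
    have hXb : |X| ≤ α * s := by
      calc |X| ≤ ‖(starRingEnd ℂ) a * ω z‖ := Complex.abs_re_le_norm _
        _ = α * s := by rw [norm_mul, Complex.norm_conj, haα]
    have hnsq : Complex.normSq (a - ω z) ≤ r ^ 2 * Complex.normSq (1 - (starRingEnd ℂ) a * ω z) := by
      calc Complex.normSq (a - ω z) = ‖a - ω z‖ ^ 2 := (Complex.sq_norm _).symm
        _ ≤ (‖z‖ * ‖1 - (starRingEnd ℂ) a * ω z‖) ^ 2 :=
            pow_le_pow_left₀ (norm_nonneg _) hSP 2
        _ = r ^ 2 * Complex.normSq (1 - (starRingEnd ℂ) a * ω z) := by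
            rw [mul_pow, Complex.sq_norm, Complex.sq_norm]
    rw [myNormSqSub, myNormSqOneSub, ← Complex.sq_norm a, ← Complex.sq_norm (ω z), haα,
      ← hsdef, ← hXdef] at hnsq
    have hX : X ≤ α * s := (abs_le.1 hXb).2
    have hq2 := myQuadOfNormSq hr1 hr0 hX hnsq
    have hαr1 : 0 < 1 - α * r := by
      have h5 := mul_le_of_le_one_right hα0 (le_of_lt hr1)
      linarith
    have hslb := myQuadSolve hα0 hα1 hr0 hr1 hs0 hαr1 hq2
    have hBsA : B = s * A := by
      rw [hsdef, hωdef, hAdef, hBdef]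
      simp only [norm_div]
      rw [div_mul_cancel₀]
      exact ne_of_gt hA0
    exact myFinal hα0 hα1 hr0 hr1 hs0 hs1 hA0 hdist hBsA hslb hαr1 hzα
  · -- case α ≤ |z|
    intro _
    calc A ^ 2 - B ^ 2 ≤ A ^ 2 := by nlinarith [sq_nonneg B]
      _ ≤ (1 + r) ^ 2 / (1 - r) ^ 6 := hA2
end

section
/- Let f = h + conj(g) ∈ Ľ_H^α. Then for z ∈ Δ with |z| < α, |g(z)| ≥ |z|(α - |z|) / ((1 - α|z|)(1 + |z|)²). -/
open Metric Set Function Complex Topology Filter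

noncomputable def Complex.abs : AbsoluteValue ℂ ℝ := IsAbsoluteValue.toAbsoluteValue (norm : ℂ → ℝ)
lemma Complex.norm_eq_abs (z : ℂ) : ‖z‖ = Complex.abs z := rfl
lemma Complex.abs.pos {z : ℂ} (hz : z ≠ 0) : 0 < Complex.abs z := Complex.abs.pos_iff.2 hz
lemma Complex.abs.ne_zero {z : ℂ} (hz : z ≠ 0) : Complex.abs z ≠ 0 := Complex.abs.ne_zero_iff.2 hz
lemma Complex.sq_abs (z : ℂ) : Complex.abs z ^ 2 = Complex.normSq z := Complex.sq_norm z
lemma Complex.abs_apply (z : ℂ) : Complex.abs z = Real.sqrt (Complex.normSq z) := Complex.norm_def z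
lemma Complex.abs_conj (z : ℂ) : Complex.abs ((starRingEnd ℂ) z) = Complex.abs z := Complex.norm_conj z
lemma Complex.abs_ofReal (r : ℝ) : Complex.abs (r : ℂ) = |r| := by
  show ‖(r : ℂ)‖ = |r|
  simp
lemma Complex.continuous_abs : Continuous Complex.abs := continuous_norm
lemma Complex.re_le_abs (z : ℂ) : z.re ≤ Complex.abs z := Complex.re_le_norm z

lemma aux_hsd {h : ℂ → ℂ} (hd : DifferentiableOn ℂ h (ball (0:ℂ) 1)) {x : ℂ}
    (hx : x ∈ ball (0:ℂ) 1) : HasStrictDerivAt h (deriv h x) x := by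
  have ha : AnalyticAt ℂ h x := hd.analyticAt (isOpen_ball.mem_nhds hx)
  have := ha.hasStrictFDerivAt.hasStrictDerivAt
  have hdv : deriv h x = fderiv ℂ h x 1 := (this.hasDerivAt.deriv).symm
  rwa [hdv]

lemma aux_inv_deriv {h : ℂ → ℂ} (hd : DifferentiableOn ℂ h (ball (0:ℂ) 1))
    (hinj : Set.InjOn h (ball (0:ℂ) 1))
    (h'0 : ∀ x ∈ ball (0:ℂ) 1, deriv h x ≠ 0) {x : ℂ} (hx : x ∈ ball (0:ℂ) 1) :
    HasStrictDerivAt (Function.invFunOn h (ball (0:ℂ) 1)) (deriv h x)⁻¹ (h x) := by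
  have hsd := aux_hsd hd hx
  refine hsd.to_local_left_inverse (h'0 x hx) ?_
  filter_upwards [isOpen_ball.mem_nhds hx] with x' hx'
  exact hinj.leftInvOn_invFunOn hx'

lemma aux_seg {w : ℂ} {t : ℝ} (ht : t ∈ Icc (0:ℝ) 1) : (t:ℂ) * w ∈ segment ℝ 0 w := by
  rw [segment_eq_image]
  exact ⟨t, ht, by simp [Complex.real_smul]⟩

lemma aux_comp {Φ : ℂ → ℂ} {c w : ℂ} {t : ℝ}
    (hΦ : HasStrictDerivAt Φ c ((t:ℂ) * w)) :
    HasDerivAt (fun s : ℝ => Φ ((s:ℂ) * w)) (c * w) t := by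
  have hu : HasDerivAt (fun s : ℝ => (s:ℂ) * w) w t := by
    simpa using (Complex.ofRealCLM.hasDerivAt (x := t)).mul_const w
  have := (hΦ.hasDerivAt.hasFDerivAt.restrictScalars ℝ).comp_hasDerivAt t hu
  simpa [mul_comm, Function.comp_def] using this

variable {h : ℂ → ℂ} {z : ℂ}

-- basic facts about the curve  γ t = h⁻¹ (t · h z)
lemma aux_curve (hd : DifferentiableOn ℂ h (ball (0:ℂ) 1))
    (hinj : Set.InjOn h (ball (0:ℂ) 1))
    (hstar : ∀ w ∈ h '' (ball (0:ℂ) 1), segment ℝ 0 w ⊆ h '' (ball (0:ℂ) 1))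
    (h'0 : ∀ x ∈ ball (0:ℂ) 1, deriv h x ≠ 0)
    (hz : z ∈ ball (0:ℂ) 1) (t : ℝ) (ht : t ∈ Icc (0:ℝ) 1) :
    (Function.invFunOn h (ball (0:ℂ) 1) ((t:ℂ) * h z) ∈ ball (0:ℂ) 1) ∧
    h (Function.invFunOn h (ball (0:ℂ) 1) ((t:ℂ) * h z)) = (t:ℂ) * h z ∧
    HasDerivAt (fun s : ℝ => Function.invFunOn h (ball (0:ℂ) 1) ((s:ℂ) * h z))
      ((deriv h (Function.invFunOn h (ball (0:ℂ) 1) ((t:ℂ) * h z)))⁻¹ * h z) t := by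
  set Φ := Function.invFunOn h (ball (0:ℂ) 1) with hΦdef
  have hmem : (t:ℂ) * h z ∈ h '' ball (0:ℂ) 1 :=
    hstar (h z) ⟨z, hz, rfl⟩ (aux_seg ht)
  obtain ⟨x, hxb, hxe⟩ := hmem
  have hex : ∃ a ∈ ball (0:ℂ) 1, h a = (t:ℂ) * h z := ⟨x, hxb, hxe⟩
  have hΦmem : Φ ((t:ℂ) * h z) ∈ ball (0:ℂ) 1 := Function.invFunOn_mem hex
  have hΦeq : h (Φ ((t:ℂ) * h z)) = (t:ℂ) * h z := Function.invFunOn_eq hex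
  refine ⟨hΦmem, hΦeq, ?_⟩
  have hx' : Φ ((t:ℂ) * h z) = x := by
    rw [← hxe]; exact hinj.leftInvOn_invFunOn hxb
  have hsd : HasStrictDerivAt Φ (deriv h x)⁻¹ ((t:ℂ) * h z) := by
    rw [← hxe]; exact aux_inv_deriv hd hinj h'0 hxb
  rw [hx']
  exact aux_comp hsd

lemma aux_curve_zero (hinj : Set.InjOn h (ball (0:ℂ) 1)) (hz : z ∈ ball (0:ℂ) 1)
    (h0 : h 0 = 0) :
    Function.invFunOn h (ball (0:ℂ) 1) ((0:ℝ):ℂ) = 0 ∧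
    Function.invFunOn h (ball (0:ℂ) 1) (((1:ℝ):ℂ) * h z) = z := by
  constructor
  · have : ((0:ℝ):ℂ) = h 0 := by simp [h0]
    rw [this]
    exact hinj.leftInvOn_invFunOn (by simp)
  · have : ((1:ℝ):ℂ) * h z = h z := by simp
    rw [this]
    exact hinj.leftInvOn_invFunOn hz

-- |g z| ≤ |h z| in the ball
lemma aux_gle {g : ℂ → ℂ} (hd : DifferentiableOn ℂ h (ball (0:ℂ) 1))
    (gd : DifferentiableOn ℂ g (ball (0:ℂ) 1))
    (hinj : Set.InjOn h (ball (0:ℂ) 1))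
    (hstar : ∀ w ∈ h '' (ball (0:ℂ) 1), segment ℝ 0 w ⊆ h '' (ball (0:ℂ) 1))
    (hz : z ∈ ball (0:ℂ) 1)
    (h0 : h 0 = 0) (g0 : g 0 = 0)
    (hsp : ∀ x ∈ ball (0:ℂ) 1, Complex.abs (deriv g x) < Complex.abs (deriv h x)) :
    Complex.abs (g z) ≤ Complex.abs (h z) := by
  have h'0 : ∀ x ∈ ball (0:ℂ) 1, deriv h x ≠ 0 := fun x hx => by
    have := (Complex.abs.nonneg _).trans_lt (hsp x hx)
    exact fun he => by simp [he] at this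
  set Φ := Function.invFunOn h (ball (0:ℂ) 1) with hΦdef
  set γ : ℝ → ℂ := fun s => Φ ((s:ℂ) * h z) with hγdef
  have key : ∀ t ∈ Icc (0:ℝ) 1,
      HasDerivWithinAt (fun s => g (γ s))
        (deriv g (γ t) * ((deriv h (γ t))⁻¹ * h z)) (Icc (0:ℝ) 1) t := by
    intro t ht
    obtain ⟨hmem, _, hder⟩ := aux_curve hd hinj hstar h'0 hz t ht
    have hg : HasStrictDerivAt g (deriv g (γ t)) (γ t) := aux_hsd gd hmem
    have h2 := (hg.hasDerivAt.hasFDerivAt.restrictScalars ℝ).comp_hasDerivAt t hder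
    refine HasDerivAt.hasDerivWithinAt ?_
    have h3 : HasDerivAt (fun s => g (γ s))
        (((deriv h (γ t))⁻¹ * h z) • deriv g (γ t)) t := h2
    exact h3.congr_deriv (by rw [smul_eq_mul]; ring)
  have bound : ∀ t ∈ Icc (0:ℝ) 1,
      ‖deriv g (γ t) * ((deriv h (γ t))⁻¹ * h z)‖ ≤ Complex.abs (h z) := by
    intro t ht
    obtain ⟨hmem, _, _⟩ := aux_curve hd hinj hstar h'0 hz t ht
    have h1 : Complex.abs (deriv g (γ t)) ≤ Complex.abs (deriv h (γ t)) :=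
      (hsp _ hmem).le
    have h2 : (0:ℝ) < Complex.abs (deriv h (γ t)) :=
      (Complex.abs.nonneg _).trans_lt (hsp _ hmem)
    calc ‖deriv g (γ t) * ((deriv h (γ t))⁻¹ * h z)‖
        = Complex.abs (deriv g (γ t)) / Complex.abs (deriv h (γ t)) * Complex.abs (h z) := by
          simp [Complex.norm_eq_abs, map_mul, map_inv₀, div_eq_mul_inv, mul_assoc]
      _ ≤ 1 * Complex.abs (h z) := by
          apply mul_le_mul_of_nonneg_right _ (Complex.abs.nonneg _)
          exact div_le_one_of_le₀ h1 h2.le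
      _ = Complex.abs (h z) := one_mul _
  have := (convex_Icc (0:ℝ) 1).norm_image_sub_le_of_norm_hasDerivWithin_le
      key bound (left_mem_Icc.2 zero_le_one) (right_mem_Icc.2 zero_le_one)
  obtain ⟨hγ0, hγ1⟩ := aux_curve_zero hinj hz h0
  have hG1 : g (γ 1) = g z := by
    have e1 : Φ (((1:ℝ):ℂ) * h z) = z := hγ1
    show g (Φ (((1:ℝ):ℂ) * h z)) = g z
    rw [e1]
  have hG0 : g (γ 0) = 0 := by
    have e0 : Φ (((0:ℝ):ℂ)) = 0 := hγ0
    show g (Φ (((0:ℝ):ℂ) * h z)) = 0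
    rw [show ((0:ℝ):ℂ) * h z = ((0:ℝ):ℂ) by simp, e0, g0]
  rw [hG1, hG0] at this
  simpa [Complex.norm_eq_abs] using this


-- Schwarz lemma with closed bound
lemma aux_schwarz {F : ℂ → ℂ} (hF : DifferentiableOn ℂ F (ball (0:ℂ) 1))
    (hF0 : F 0 = 0) (hFb : ∀ w ∈ ball (0:ℂ) 1, Complex.abs (F w) ≤ 1)
    {z : ℂ} (hz : z ∈ ball (0:ℂ) 1) : Complex.abs (F z) ≤ Complex.abs z := by
  refine le_of_forall_pos_le_add fun ε hε => ?_
  have hmaps : MapsTo F (ball (0:ℂ) 1) (ball (F 0) (1 + ε)) := by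
    intro w hw
    rw [hF0, mem_ball_zero_iff]
    calc ‖F w‖ ≤ 1 := hFb w hw
      _ < 1 + ε := by linarith
  have := Complex.dist_le_div_mul_dist_of_mapsTo_ball hF (hmaps.mono_right ball_subset_closedBall) hz
  rw [hF0, dist_zero_right, dist_zero_right, div_one] at this
  calc Complex.abs (F z) ≤ (1 + ε) * ‖z‖ := this
    _ = Complex.abs z + ε * Complex.abs z := by rw [Complex.norm_eq_abs]; ring
    _ ≤ Complex.abs z + ε := by
        have hz1 : Complex.abs z ≤ 1 := by
          rw [← Complex.norm_eq_abs]; exact (mem_ball_zero_iff.1 hz).le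
        nlinarith [Complex.abs.nonneg z]

lemma aux_mobius_den {a w : ℂ} (ha : Complex.abs a < 1) (hw : Complex.abs w ≤ 1) :
    1 - (starRingEnd ℂ) a * w ≠ 0 := by
  intro hc
  have h1 : Complex.abs ((starRingEnd ℂ) a * w) = 1 := by
    have : (starRingEnd ℂ) a * w = 1 := by linear_combination -hc
    rw [this]; simp
  rw [map_mul, Complex.abs_conj] at h1
  nlinarith [Complex.abs.nonneg a, Complex.abs.nonneg w]

lemma aux_mobius_bound {a w : ℂ} (ha : Complex.abs a < 1) (hw : Complex.abs w ≤ 1) :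
    Complex.abs (a - w) ≤ Complex.abs (1 - (starRingEnd ℂ) a * w) := by
  have h2 : Complex.normSq (a - w) ≤ Complex.normSq (1 - (starRingEnd ℂ) a * w) := by
    have ha2 : a.re ^ 2 + a.im ^ 2 < 1 := by
      have := Complex.sq_abs a
      rw [Complex.normSq_apply] at this
      nlinarith [Complex.abs.nonneg a]
    have hw2 : w.re ^ 2 + w.im ^ 2 ≤ 1 := by
      have := Complex.sq_abs w
      rw [Complex.normSq_apply] at this
      nlinarith [Complex.abs.nonneg w]
    simp only [Complex.normSq_apply, Complex.sub_re, Complex.sub_im, Complex.one_re,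
      Complex.one_im, Complex.mul_re, Complex.mul_im, Complex.conj_re, Complex.conj_im]
    nlinarith [sq_nonneg (a.re*w.re + a.im*w.im), sq_nonneg (a.re*w.im - a.im*w.re)]
  have := Real.sqrt_le_sqrt h2
  rwa [← Complex.abs_apply, ← Complex.abs_apply] at this

-- Schwarz-Pick type inequality
lemma aux_pick {ω : ℂ → ℂ} (hω : DifferentiableOn ℂ ω (ball (0:ℂ) 1))
    (hωb : ∀ w ∈ ball (0:ℂ) 1, Complex.abs (ω w) ≤ 1)
    (hα : Complex.abs (ω 0) < 1)
    {z : ℂ} (hz : z ∈ ball (0:ℂ) 1) :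
    Complex.abs (ω 0 - ω z) ≤ Complex.abs z * Complex.abs (1 - (starRingEnd ℂ) (ω 0) * ω z) := by
  set F : ℂ → ℂ := fun w => (ω 0 - ω w) / (1 - (starRingEnd ℂ) (ω 0) * ω w) with hFdef
  have hden : ∀ w ∈ ball (0:ℂ) 1, 1 - (starRingEnd ℂ) (ω 0) * ω w ≠ 0 :=
    fun w hw => aux_mobius_den hα (hωb w hw)
  have hFd : DifferentiableOn ℂ F (ball (0:ℂ) 1) := by
    apply DifferentiableOn.div
    · exact (differentiableOn_const _).sub hω
    · exact (differentiableOn_const _).sub ((differentiableOn_const _).mul hω)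
    · exact hden
  have hF0 : F 0 = 0 := by
    simp only [hFdef]
    rw [sub_self, zero_div]
  have hFb : ∀ w ∈ ball (0:ℂ) 1, Complex.abs (F w) ≤ 1 := by
    intro w hw
    simp only [hFdef, map_div₀]
    rw [div_le_one (by
      have := hden w hw
      have := Complex.abs.pos this
      linarith)]
    exact aux_mobius_bound hα (hωb w hw)
  have := aux_schwarz hFd hF0 hFb hz
  simp only [hFdef, map_div₀] at this
  rw [div_le_iff₀ (Complex.abs.pos (hden z hz))] at this
  linarith [this]

-- the quadratic estimate
set_option maxHeartbeats 1000000 in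
lemma aux_quad {a w : ℂ} {α r : ℝ} (ha : Complex.abs a = α) (hα : α < 1) (hr : 0 ≤ r)
    (hrα : r < α) (hw1 : Complex.abs w ≤ 1)
    (hkey : Complex.abs (a - w) ≤ r * Complex.abs (1 - (starRingEnd ℂ) a * w)) :
    α - r ≤ Complex.abs w * (1 - α * r) := by
  set s := Complex.abs w with hs
  have hs0 : 0 ≤ s := Complex.abs.nonneg w
  have hα0 : 0 ≤ α := ha ▸ Complex.abs.nonneg a
  -- squared inequality
  have hsq : Complex.normSq (a - w) ≤ r ^ 2 * Complex.normSq (1 - (starRingEnd ℂ) a * w) := by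
    have h1 : Complex.abs (a - w) ^ 2 ≤ (r * Complex.abs (1 - (starRingEnd ℂ) a * w)) ^ 2 := by
      apply pow_le_pow_left₀ (Complex.abs.nonneg _) hkey
    rw [Complex.sq_abs] at h1
    rw [mul_pow, Complex.sq_abs] at h1
    exact h1
  -- expand
  have ha2 : a.re ^ 2 + a.im ^ 2 = α ^ 2 := by
    have := Complex.sq_abs a; rw [Complex.normSq_apply, ha] at this; nlinarith
  have hw2 : w.re ^ 2 + w.im ^ 2 = s ^ 2 := by
    have := Complex.sq_abs w; rw [Complex.normSq_apply] at this; nlinarith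
  set x := a.re * w.re + a.im * w.im with hx
  have hxs : x ≤ α * s := by
    have h1 : Complex.abs ((starRingEnd ℂ) a * w) = α * s := by
      rw [map_mul, Complex.abs_conj, ha]
    have h2 : ((starRingEnd ℂ) a * w).re ≤ Complex.abs ((starRingEnd ℂ) a * w) :=
      Complex.re_le_abs _
    rw [h1] at h2
    simp only [Complex.mul_re, Complex.conj_re, Complex.conj_im] at h2
    nlinarith [h2]
  have hexp : α ^ 2 - 2 * x + s ^ 2 ≤ r ^ 2 * (1 - 2 * x + α ^ 2 * s ^ 2) := by
    have e1 : Complex.normSq (a - w) = α ^ 2 - 2 * x + s ^ 2 := by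
      simp only [Complex.normSq_apply, Complex.sub_re, Complex.sub_im]
      nlinarith [ha2, hw2]
    have e2 : Complex.normSq (1 - (starRingEnd ℂ) a * w) = 1 - 2 * x + α ^ 2 * s ^ 2 := by
      simp only [Complex.normSq_apply, Complex.sub_re, Complex.sub_im, Complex.one_re,
        Complex.one_im, Complex.mul_re, Complex.mul_im, Complex.conj_re, Complex.conj_im]
      nlinarith [ha2, hw2]
    rw [e1, e2] at hsq
    exact hsq
  -- conclude by the factorization trick
  clear_value s x
  clear hkey hsq ha2 hw2 ha hs hx
  by_contra hcon
  push_neg at hcon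
  have hA : s * (1 - α * r) - (α - r) < 0 := by linarith
  have hαs : α * s ≤ 1 := by nlinarith
  have hB : s * (1 + α * r) - (α + r) < 0 := by
    have hp : 0 ≤ r * (1 - α * s) := mul_nonneg hr (by linarith)
    nlinarith [hp]
  have hr2 : (0:ℝ) ≤ 1 - r ^ 2 := by nlinarith
  have hx2 : 2 * x * (1 - r ^ 2) ≤ 2 * (α * s) * (1 - r ^ 2) := by
    nlinarith [mul_le_mul_of_nonneg_right hxs hr2]
  have hQ' : α^2 + s^2 - r^2 - r^2 * α^2 * s^2 - 2*α*s*(1 - r^2) ≤ 0 := by nlinarith [hexp, hx2]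
  have hQ : (s * (1 - α * r) - (α - r)) * (s * (1 + α * r) - (α + r)) ≤ 0 := by nlinarith [hQ']
  nlinarith [mul_pos_of_neg_of_neg hA hB, hQ]


-- Schwarz bound for the maps  φ_t = h⁻¹ ∘ (t·h)
lemma aux_phi_schwarz {h : ℂ → ℂ} (hd : DifferentiableOn ℂ h (ball (0:ℂ) 1))
    (hinj : Set.InjOn h (ball (0:ℂ) 1))
    (hstar : ∀ w ∈ h '' (ball (0:ℂ) 1), segment ℝ 0 w ⊆ h '' (ball (0:ℂ) 1))
    (h'0 : ∀ x ∈ ball (0:ℂ) 1, deriv h x ≠ 0) (h0 : h 0 = 0)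
    {z : ℂ} (hz : z ∈ ball (0:ℂ) 1) {t : ℝ} (ht : t ∈ Icc (0:ℝ) 1) :
    Complex.abs (Function.invFunOn h (ball (0:ℂ) 1) ((t:ℂ) * h z)) ≤ Complex.abs z := by
  set Φ := Function.invFunOn h (ball (0:ℂ) 1) with hΦdef
  set φ : ℂ → ℂ := fun w => Φ ((t:ℂ) * h w) with hφdef
  have hmem : ∀ w ∈ ball (0:ℂ) 1, ∃ a ∈ ball (0:ℂ) 1, h a = (t:ℂ) * h w := by
    intro w hw
    have : (t:ℂ) * h w ∈ h '' ball (0:ℂ) 1 := by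
      apply hstar (h w) ⟨w, hw, rfl⟩
      rw [segment_eq_image]
      exact ⟨t, ht, by simp [Complex.real_smul]⟩
    obtain ⟨a, ha1, ha2⟩ := this
    exact ⟨a, ha1, ha2⟩
  have hφd : DifferentiableOn ℂ φ (ball (0:ℂ) 1) := by
    intro w hw
    obtain ⟨a, ha1, ha2⟩ := hmem w hw
    have hΦsd : HasStrictDerivAt Φ (deriv h a)⁻¹ ((t:ℂ) * h w) := by
      rw [← ha2]
      refine (aux_hsd hd ha1).to_local_left_inverse (h'0 a ha1) ?_
      filter_upwards [isOpen_ball.mem_nhds ha1] with x' hx'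
      exact hinj.leftInvOn_invFunOn hx'
    have hin : DifferentiableAt ℂ (fun w => (t:ℂ) * h w) w :=
      (differentiableAt_const _).mul ((hd w hw).differentiableAt (isOpen_ball.mem_nhds hw))
    exact (hΦsd.hasDerivAt.differentiableAt.comp w hin).differentiableWithinAt
  have hφmaps : MapsTo φ (ball (0:ℂ) 1) (ball (0:ℂ) 1) := by
    intro w hw
    obtain ⟨a, ha1, ha2⟩ := hmem w hw
    exact Function.invFunOn_mem ⟨a, ha1, ha2⟩
  have hφ0 : φ 0 = 0 := by
    show Φ ((t:ℂ) * h 0) = 0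
    have h0mem : (0:ℂ) ∈ ball (0:ℂ) 1 := mem_ball_self one_pos
    have hleft := hinj.leftInvOn_invFunOn h0mem
    rw [h0] at hleft ⊢
    rw [mul_zero]
    exact hleft
  have := Complex.norm_le_norm_of_mapsTo_ball hφd (hφmaps.mono_right ball_subset_closedBall) hφ0 (mem_ball_zero_iff.1 hz)
  exact this

-- the real part inequality:  0 ≤ Re (z h'(z) / h(z))  via  P = h' / dslope
lemma aux_repos {h : ℂ → ℂ} (hd : DifferentiableOn ℂ h (ball (0:ℂ) 1))
    (hinj : Set.InjOn h (ball (0:ℂ) 1))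
    (hstar : ∀ w ∈ h '' (ball (0:ℂ) 1), segment ℝ 0 w ⊆ h '' (ball (0:ℂ) 1))
    (h'0 : ∀ x ∈ ball (0:ℂ) 1, deriv h x ≠ 0) (h0 : h 0 = 0)
    {z : ℂ} (hz : z ∈ ball (0:ℂ) 1) (hz0 : z ≠ 0) :
    0 ≤ ((starRingEnd ℂ) z * ((deriv h z)⁻¹ * h z)).re := by
  set Φ := Function.invFunOn h (ball (0:ℂ) 1) with hΦdef
  set γ : ℝ → ℂ := fun s => Φ ((s:ℂ) * h z) with hγdef
  -- facts about γ
  have hγ1 : γ 1 = z := by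
    show Φ (((1:ℝ):ℂ) * h z) = z
    rw [show ((1:ℝ):ℂ) * h z = h z by simp]
    exact hinj.leftInvOn_invFunOn hz
  have hγder : HasDerivAt γ ((deriv h z)⁻¹ * h z) 1 := by
    obtain ⟨hm, he, hder⟩ := aux_curve hd hinj hstar h'0 hz 1 (by norm_num)
    have e1 : invFunOn h (ball (0:ℂ) 1) (((1:ℝ):ℂ) * h z) = z := hγ1
    rw [e1] at hder
    exact hder
  set d : ℂ := (deriv h z)⁻¹ * h z with hddef
  set u : ℝ → ℝ := fun s => (γ s).re ^ 2 + (γ s).im ^ 2 with hudef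
  have hure : HasDerivAt (fun s => (γ s).re) d.re 1 := by
    have := (Complex.reCLM.hasFDerivAt (x := γ 1)).comp_hasDerivAt 1 hγder
    simpa [Function.comp_def] using this
  have huim : HasDerivAt (fun s => (γ s).im) d.im 1 := by
    have := (Complex.imCLM.hasFDerivAt (x := γ 1)).comp_hasDerivAt 1 hγder
    simpa [Function.comp_def] using this
  have hu : HasDerivAt u (2 * (z.re * d.re + z.im * d.im)) 1 := by
    have h1 := (hure.pow 2).add (huim.pow 2)
    rw [hγ1] at h1
    refine h1.congr_deriv ?_
    norm_num
    ring
  have habs2 : ∀ w : ℂ, w.re ^ 2 + w.im ^ 2 = Complex.abs w ^ 2 := by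
    intro w; rw [Complex.sq_abs, Complex.normSq_apply]; ring
  have hmax : ∀ s ∈ Icc (0:ℝ) 1, u s ≤ u 1 := by
    intro s hs
    have h1 : Complex.abs (γ s) ≤ Complex.abs z :=
      aux_phi_schwarz hd hinj hstar h'0 h0 hz hs
    show (γ s).re ^ 2 + (γ s).im ^ 2 ≤ (γ 1).re ^ 2 + (γ 1).im ^ 2
    rw [habs2, habs2, hγ1]
    exact pow_le_pow_left₀ (Complex.abs.nonneg _) h1 2
  -- derivative at the max point t = 1 is nonneg
  have hwithin : HasDerivWithinAt u (2 * (z.re * d.re + z.im * d.im)) (Icc (0:ℝ) 1) 1 :=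
    hu.hasDerivWithinAt
  rw [hasDerivWithinAt_iff_tendsto_slope] at hwithin
  have hset : Icc (0:ℝ) 1 \ {1} = Ico (0:ℝ) 1 := by
    ext s; simp only [mem_diff, mem_Icc, mem_singleton_iff, mem_Ico]
    constructor
    · rintro ⟨⟨h1, h2⟩, h3⟩; exact ⟨h1, lt_of_le_of_ne h2 h3⟩
    · rintro ⟨h1, h2⟩; exact ⟨⟨h1, h2.le⟩, h2.ne⟩
  rw [hset] at hwithin
  have hne : (𝓝[Ico (0:ℝ) 1] 1).NeBot := by
    rw [nhdsWithin_Ico_eq_nhdsLT zero_lt_one]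
    infer_instance
  have hnonneg : 0 ≤ 2 * (z.re * d.re + z.im * d.im) := by
    refine ge_of_tendsto hwithin ?_
    filter_upwards [self_mem_nhdsWithin] with s hs
    rcases hs with ⟨hs0, hs1⟩
    have h1 : u s - u 1 ≤ 0 := sub_nonpos.2 (hmax s ⟨hs0, hs1.le⟩)
    have h2 : s - 1 < 0 := by linarith
    rw [slope_def_field]
    have := div_nonneg (neg_nonneg.2 h1) (neg_nonneg.2 h2.le)
    rwa [neg_div_neg_eq] at this
  have : ((starRingEnd ℂ) z * d).re = z.re * d.re + z.im * d.im := by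
    simp only [Complex.mul_re, Complex.conj_re, Complex.conj_im]; ring
  rw [this]; linarith

lemma aux_caralg {qr qi t : ℝ} (h2 : qr^2 + qi^2 ≤ t^2) (ht0 : 0 ≤ t) (ht1 : t < 1) :
    (1-t)/(1+t) ≤ (1 - (qr^2 + qi^2))/((1-qr)^2 + qi^2) := by
  have hqrn : -t ≤ qr := by nlinarith [sq_nonneg qi]
  have hqr : qr ≤ t := by nlinarith [sq_nonneg qi]
  have hden : 0 < (1-qr)^2 + qi^2 := by nlinarith
  rw [div_le_div_iff₀ (by linarith) hden]
  have hprod : 0 ≤ (qr + t) * (1 - t) := mul_nonneg (by linarith) (by linarith)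
  nlinarith [hprod, h2]

-- positivity of Re P, where P = h' / dslope h 0
lemma aux_Ppos {h : ℂ → ℂ} (hd : DifferentiableOn ℂ h (ball (0:ℂ) 1))
    (hinj : Set.InjOn h (ball (0:ℂ) 1))
    (hstar : ∀ w ∈ h '' (ball (0:ℂ) 1), segment ℝ 0 w ⊆ h '' (ball (0:ℂ) 1))
    (h'0 : ∀ x ∈ ball (0:ℂ) 1, deriv h x ≠ 0) (h0 : h 0 = 0) (h1 : deriv h 0 = 1)
    {w : ℂ} (hw : w ∈ ball (0:ℂ) 1) :
    0 ≤ (deriv h w / dslope h 0 w).re := by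
  rcases eq_or_ne w 0 with rfl | hw0
  · rw [dslope_same, h1]; norm_num
  · have hhw : h w ≠ 0 := by
      intro hc
      exact hw0 (hinj hw (mem_ball_self one_pos) (by rw [hc, h0]))
    have hds : dslope h 0 w = w⁻¹ * h w := by
      rw [dslope_of_ne _ hw0, slope_def_field]
      rw [h0]; field_simp; ring
    set c : ℂ := (starRingEnd ℂ) w * ((deriv h w)⁻¹ * h w) with hcdef
    have hcre : 0 ≤ c.re := aux_repos hd hinj hstar h'0 h0 hw hw0
    have hcne : c ≠ 0 := by
      apply mul_ne_zero (by simpa using hw0)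
      exact mul_ne_zero (inv_ne_zero (h'0 w hw)) hhw
    have hP : deriv h w / dslope h 0 w = ((Complex.normSq w : ℝ) : ℂ) / c := by
      rw [hds, hcdef, Complex.normSq_eq_conj_mul_self]
      rw [div_eq_div_iff (by
        apply mul_ne_zero (inv_ne_zero (by simpa using hw0)) hhw) hcne]
      have hdne : deriv h w ≠ 0 := h'0 w hw
      have e1 : deriv h w * ((starRingEnd ℂ) w * ((deriv h w)⁻¹ * h w))
          = (starRingEnd ℂ) w * h w * (deriv h w * (deriv h w)⁻¹) := by ring
      have e2 : (starRingEnd ℂ) w * w * (w⁻¹ * h w)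
          = (starRingEnd ℂ) w * h w * (w * w⁻¹) := by ring
      rw [e1, e2, mul_inv_cancel₀ hdne, mul_inv_cancel₀ hw0]
    rw [hP]
    rw [Complex.div_re]
    simp only [Complex.ofReal_re, Complex.ofReal_im, zero_mul, zero_div, add_zero]
    apply div_nonneg _ (Complex.normSq_nonneg _)
    exact mul_nonneg (Complex.normSq_nonneg _) hcre

-- Carathéodory-type lower bound for Re P
lemma aux_cara {h : ℂ → ℂ} (hd : DifferentiableOn ℂ h (ball (0:ℂ) 1))
    (hinj : Set.InjOn h (ball (0:ℂ) 1))
    (hstar : ∀ w ∈ h '' (ball (0:ℂ) 1), segment ℝ 0 w ⊆ h '' (ball (0:ℂ) 1))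
    (h'0 : ∀ x ∈ ball (0:ℂ) 1, deriv h x ≠ 0) (h0 : h 0 = 0) (h1 : deriv h 0 = 1)
    {z : ℂ} (hz : z ∈ ball (0:ℂ) 1) :
    (1 - Complex.abs z)/(1 + Complex.abs z) ≤ (deriv h z / dslope h 0 z).re := by
  set P : ℂ → ℂ := fun w => deriv h w / dslope h 0 w with hPdef
  have hball : ball (0:ℂ) 1 ∈ 𝓝 (0:ℂ) := isOpen_ball.mem_nhds (mem_ball_self one_pos)
  have hHne : ∀ w ∈ ball (0:ℂ) 1, dslope h 0 w ≠ 0 := by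
    intro w hw
    rcases eq_or_ne w 0 with rfl | hw0
    · rw [dslope_same, h1]; exact one_ne_zero
    · rw [dslope_of_ne _ hw0, slope_def_field, h0]
      have hhw : h w ≠ 0 := by
        intro hc
        exact hw0 (hinj hw (mem_ball_self one_pos) (by rw [hc, h0]))
      intro hc
      apply hhw
      field_simp at hc
      simpa using hc
  have hPd : DifferentiableOn ℂ P (ball (0:ℂ) 1) := by
    apply DifferentiableOn.div
    · exact ((hd.analyticOnNhd isOpen_ball).deriv).differentiableOn
    · exact (Complex.differentiableOn_dslope hball).2 hd
    · exact hHne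
  have hre : ∀ w ∈ ball (0:ℂ) 1, 0 ≤ (P w).re :=
    fun w hw => aux_Ppos hd hinj hstar h'0 h0 h1 hw
  have hP0 : P 0 = 1 := by
    show deriv h 0 / dslope h 0 0 = 1
    rw [dslope_same, h1]; norm_num
  -- the function q
  set q : ℂ → ℂ := fun w => (P w - 1) / (P w + 1) with hqdef
  have hden : ∀ w ∈ ball (0:ℂ) 1, P w + 1 ≠ 0 := by
    intro w hw hc
    have := congrArg Complex.re hc
    simp only [Complex.add_re, Complex.one_re, Complex.zero_re] at this
    linarith [hre w hw]
  have hqd : DifferentiableOn ℂ q (ball (0:ℂ) 1) := by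
    apply DifferentiableOn.div
    · exact hPd.sub (differentiableOn_const _)
    · exact hPd.add (differentiableOn_const _)
    · exact hden
  have hq0 : q 0 = 0 := by
    show (P 0 - 1) / (P 0 + 1) = 0
    rw [hP0]; simp
  have hqb : ∀ w ∈ ball (0:ℂ) 1, Complex.abs (q w) ≤ 1 := by
    intro w hw
    show Complex.abs ((P w - 1) / (P w + 1)) ≤ 1
    rw [map_div₀, div_le_one (Complex.abs.pos (hden w hw))]
    have hsq : Complex.normSq (P w - 1) ≤ Complex.normSq (P w + 1) := by
      simp only [Complex.normSq_apply, Complex.sub_re, Complex.sub_im, Complex.add_re,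
        Complex.add_im, Complex.one_re, Complex.one_im]
      nlinarith [hre w hw]
    have := Real.sqrt_le_sqrt hsq
    rwa [← Complex.abs_apply, ← Complex.abs_apply] at this
  have hqs : Complex.abs (q z) ≤ Complex.abs z := aux_schwarz hqd hq0 hqb hz
  -- express P z via q z
  have hq1ne : (1:ℂ) - q z ≠ 0 := by
    intro hc
    have h1q : Complex.abs (q z) = 1 := by
      have : q z = 1 := by linear_combination -hc
      rw [this]; simp
    have hz1 : Complex.abs z < 1 := mem_ball_zero_iff.1 hz
    rw [h1q] at hqs
    linarith
  have hPq : P z = (1 + q z) / (1 - q z) := by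
    have hdz := hden z hz
    have : q z * (P z + 1) = P z - 1 := by
      show (P z - 1) / (P z + 1) * (P z + 1) = P z - 1
      field_simp
    rw [eq_div_iff hq1ne]
    linear_combination -this
  show (1 - Complex.abs z) / (1 + Complex.abs z) ≤ (P z).re
  rw [hPq]
  rw [Complex.div_re, ← add_div]
  have hnum : (1 + q z).re * (1 - q z).re + (1 + q z).im * (1 - q z).im
      = 1 - ((q z).re^2 + (q z).im^2) := by
    simp only [Complex.add_re, Complex.add_im, Complex.sub_re, Complex.sub_im,
      Complex.one_re, Complex.one_im]
    ring
  have hdenr : Complex.normSq (1 - q z) = (1 - (q z).re)^2 + (q z).im^2 := by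
    simp only [Complex.normSq_apply, Complex.sub_re, Complex.sub_im, Complex.one_re,
      Complex.one_im]
    ring
  rw [hnum, hdenr]
  have habs : (q z).re^2 + (q z).im^2 ≤ (Complex.abs z)^2 := by
    have : (q z).re^2 + (q z).im^2 = Complex.abs (q z) ^ 2 := by
      rw [Complex.sq_abs, Complex.normSq_apply]; ring
    rw [this]
    exact pow_le_pow_left₀ (Complex.abs.nonneg _) hqs 2
  exact aux_caralg habs (Complex.abs.nonneg z) (mem_ball_zero_iff.1 hz)


-- growth theorem for starlike functions
lemma aux_growth {h : ℂ → ℂ} (hd : DifferentiableOn ℂ h (ball (0:ℂ) 1))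
    (hinj : Set.InjOn h (ball (0:ℂ) 1))
    (hstar : ∀ w ∈ h '' (ball (0:ℂ) 1), segment ℝ 0 w ⊆ h '' (ball (0:ℂ) 1))
    (h'0 : ∀ x ∈ ball (0:ℂ) 1, deriv h x ≠ 0) (h0 : h 0 = 0) (h1 : deriv h 0 = 1)
    {z : ℂ} (hz : z ∈ ball (0:ℂ) 1) :
    Complex.abs z / (1 + Complex.abs z)^2 ≤ Complex.abs (h z) := by
  rcases eq_or_ne z 0 with rfl | hz0
  · simp [h0]
  have hball : ball (0:ℂ) 1 ∈ nhds (0:ℂ) := isOpen_ball.mem_nhds (mem_ball_self one_pos)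
  have hhne : ∀ w ∈ ball (0:ℂ) 1, w ≠ 0 → h w ≠ 0 := by
    intro w hw hw0 hc
    exact hw0 (hinj hw (mem_ball_self one_pos) (by rw [hc, h0]))
  set r : ℝ := Complex.abs z with hrdef
  have hr0 : 0 < r := Complex.abs.pos hz0
  have hr1 : r < 1 := mem_ball_zero_iff.1 hz
  set w0 : ℂ := ((r:ℝ):ℂ)⁻¹ * z with hw0def
  set c : ℝ → ℂ := fun t => (t:ℂ) * w0 with hcdef
  have hrC : ((r:ℝ):ℂ) ≠ 0 := by
    simp only [ne_eq, Complex.ofReal_eq_zero]; exact hr0.ne'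
  have hcabs : ∀ t : ℝ, 0 ≤ t → Complex.abs (c t) = t := by
    intro t ht
    show Complex.abs ((t:ℂ) * (((r:ℝ):ℂ)⁻¹ * z)) = t
    rw [map_mul, map_mul, map_inv₀, Complex.abs_ofReal, Complex.abs_ofReal,
      _root_.abs_of_nonneg ht, _root_.abs_of_nonneg hr0.le]
    field_simp
    rfl
  have hcr : c r = z := by
    show ((r:ℝ):ℂ) * (((r:ℝ):ℂ)⁻¹ * z) = z
    field_simp
  have hcmem : ∀ t ∈ Ioc (0:ℝ) r, c t ∈ ball (0:ℂ) 1 := by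
    intro t ht
    rw [mem_ball_zero_iff, Complex.norm_eq_abs, hcabs t ht.1.le]
    exact lt_of_le_of_lt ht.2 hr1
  have hcne : ∀ t ∈ Ioc (0:ℝ) r, c t ≠ 0 := by
    intro t ht hc
    have := hcabs t ht.1.le
    rw [hc] at this
    simp at this
    exact ht.1.ne' this.symm
  have hdsc : ∀ t ∈ Ioc (0:ℝ) r, dslope h 0 (c t) = (c t)⁻¹ * h (c t) := by
    intro t ht
    rw [dslope_of_ne _ (hcne t ht), slope_def_field, h0]
    field_simp
    simp
  have hdsabs : ∀ t ∈ Ioc (0:ℝ) r, Complex.abs (dslope h 0 (c t)) = Complex.abs (h (c t)) / t := by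
    intro t ht
    rw [hdsc t ht, map_mul, map_inv₀, hcabs t ht.1.le, mul_comm, div_eq_mul_inv]
  have hdsne : ∀ t ∈ Ioc (0:ℝ) r, Complex.abs (dslope h 0 (c t)) ≠ 0 := by
    intro t ht
    rw [hdsabs t ht]
    exact div_ne_zero (Complex.abs.ne_zero (hhne _ (hcmem t ht) (hcne t ht))) ht.1.ne'
  set F : ℝ → ℝ := fun t => Real.log (Complex.abs (dslope h 0 (c t))) + 2 * Real.log (1 + t)
    with hFdef
  -- continuity of F on (0, r]
  have hccont : Continuous c := by
    show Continuous fun t : ℝ => (t:ℂ) * w0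
    exact Complex.continuous_ofReal.mul continuous_const
  have hFc : ContinuousOn F (Ioc (0:ℝ) r) := by
    apply ContinuousOn.add
    · apply ContinuousOn.log
      · apply Complex.continuous_abs.comp_continuousOn
        apply ((Complex.differentiableOn_dslope hball).2 hd).continuousOn.comp
          hccont.continuousOn
        intro t ht
        exact hcmem t ht
      · exact hdsne
    · apply ContinuousOn.mul continuousOn_const
      apply ContinuousOn.log
      · exact (continuous_const.add continuous_id).continuousOn
      · intro t ht
        have := ht.1
        positivity
  -- the derivative of F is nonneg on (0,r)
  have hFd : ∀ t ∈ Ioo (0:ℝ) r, HasDerivAt F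
      (((deriv h (c t) * w0 / h (c t)).re) - t⁻¹ + 2 * (1+t)⁻¹) t := by
    intro t ht
    have htIoc : t ∈ Ioc (0:ℝ) r := ⟨ht.1, ht.2.le⟩
    have hctm : c t ∈ ball (0:ℂ) 1 := hcmem t htIoc
    have hhct : h (c t) ≠ 0 := hhne _ hctm (hcne t htIoc)
    have hcder : HasDerivAt c w0 t := by
      show HasDerivAt (fun s : ℝ => (s:ℂ) * w0) w0 t
      simpa using (Complex.ofRealCLM.hasDerivAt (x := t)).mul_const w0
    have hhd : HasDerivAt (fun s => h (c s)) (deriv h (c t) * w0) t := by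
      have hsd : HasStrictDerivAt h (deriv h (c t)) (c t) := aux_hsd hd hctm
      have := (hsd.hasDerivAt.hasFDerivAt.restrictScalars ℝ).comp_hasDerivAt t hcder
      simpa [mul_comm, Function.comp_def] using this
    set D : ℂ := deriv h (c t) * w0 with hDdef
    have hre_der : HasDerivAt (fun s => (h (c s)).re) D.re t := by
      have := (Complex.reCLM.hasFDerivAt (x := h (c t))).comp_hasDerivAt t hhd
      simpa [Function.comp_def] using this
    have him_der : HasDerivAt (fun s => (h (c s)).im) D.im t := by
      have := (Complex.imCLM.hasFDerivAt (x := h (c t))).comp_hasDerivAt t hhd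
      simpa [Function.comp_def] using this
    set N : ℝ → ℝ := fun s => (h (c s)).re ^ 2 + (h (c s)).im ^ 2 with hNdef
    have hNder : HasDerivAt N (2 * ((h (c t)).re * D.re + (h (c t)).im * D.im)) t := by
      have h1 := (hre_der.pow 2).add (him_der.pow 2)
      refine h1.congr_deriv ?_
      norm_num
      ring
    have hNpos : 0 < N t := by
      have : N t = Complex.normSq (h (c t)) := by
        rw [Complex.normSq_apply]; ring
      rw [this]
      exact Complex.normSq_pos.2 hhct
    set G : ℝ → ℝ := fun s => (1/2) * Real.log (N s) - Real.log s + 2 * Real.log (1 + s)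
      with hGdef
    have hGder : HasDerivAt G
        ((1/2) * ((2 * ((h (c t)).re * D.re + (h (c t)).im * D.im)) / N t)
          - t⁻¹ + 2 * (1+t)⁻¹) t := by
      apply HasDerivAt.add
      · apply HasDerivAt.sub
        · exact (hNder.log hNpos.ne').const_mul (1/2)
        · exact Real.hasDerivAt_log ht.1.ne'
      · have h2 : HasDerivAt (fun s : ℝ => 1 + s) 1 t := (hasDerivAt_id t).const_add 1
        have h3 := (h2.log (by have := ht.1; intro hc; linarith : (1:ℝ) + t ≠ 0)).const_mul (2:ℝ)
        exact h3.congr_deriv (by rw [one_div])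
    -- F equals G near t
    have hFG : F =ᶠ[nhds t] G := by
      filter_upwards [isOpen_Ioo.mem_nhds ht] with s hs
      have hsIoc : s ∈ Ioc (0:ℝ) r := ⟨hs.1, hs.2.le⟩
      show Real.log (Complex.abs (dslope h 0 (c s))) + 2 * Real.log (1 + s) = _
      have e1 : Complex.abs (dslope h 0 (c s)) = Complex.abs (h (c s)) / s := hdsabs s hsIoc
      have e2 : N s = Complex.abs (h (c s)) ^ 2 := by
        show (h (c s)).re ^ 2 + (h (c s)).im ^ 2 = _
        rw [Complex.sq_abs, Complex.normSq_apply]; ring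
      have habs_pos : 0 < Complex.abs (h (c s)) :=
        Complex.abs.pos (hhne _ (hcmem s hsIoc) (hcne s hsIoc))
      have e3 : Real.log (Complex.abs (h (c s)) / s)
          = (1/2) * Real.log (N s) - Real.log s := by
        rw [Real.log_div habs_pos.ne' hs.1.ne', e2, Real.log_pow]
        push_cast
        ring
      show Real.log (Complex.abs (dslope h 0 (c s))) + 2 * Real.log (1 + s)
        = (1/2) * Real.log (N s) - Real.log s + 2 * Real.log (1 + s)
      rw [e1, e3]
    have hFder := hGder.congr_of_eventuallyEq hFG
    refine hFder.congr_deriv ?_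
    have e4 : (D / h (c t)).re
        = ((h (c t)).re * D.re + (h (c t)).im * D.im) / N t := by
      rw [Complex.div_re]
      have : Complex.normSq (h (c t)) = N t := by
        rw [Complex.normSq_apply]; ring
      rw [this, ← add_div]
      ring_nf
    rw [e4]
    ring
  -- nonnegativity of the derivative
  have hFd_nonneg : ∀ t ∈ Ioo (0:ℝ) r,
      0 ≤ ((deriv h (c t) * w0 / h (c t)).re) - t⁻¹ + 2 * (1+t)⁻¹ := by
    intro t ht
    have htIoc : t ∈ Ioc (0:ℝ) r := ⟨ht.1, ht.2.le⟩
    have hctm : c t ∈ ball (0:ℂ) 1 := hcmem t htIoc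
    have hhct : h (c t) ≠ 0 := hhne _ hctm (hcne t htIoc)
    have hcara := aux_cara hd hinj hstar h'0 h0 h1 hctm
    rw [hcabs t ht.1.le] at hcara
    have hctne := hcne t htIoc
    have e5 : deriv h (c t) / dslope h 0 (c t) = ((t:ℝ):ℂ) * (deriv h (c t) * w0 / h (c t)) := by
      rw [hdsc t htIoc]
      have hct_eq : c t = ((t:ℝ):ℂ) * w0 := rfl
      rw [hct_eq]
      field_simp
    rw [e5] at hcara
    have hre_mul : (((t:ℝ):ℂ) * (deriv h (c t) * w0 / h (c t))).re
        = t * (deriv h (c t) * w0 / h (c t)).re := by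
      simp [Complex.mul_re]
    rw [hre_mul] at hcara
    have hxge : (1-t)/(1+t) / t ≤ (deriv h (c t) * w0 / h (c t)).re := by
      rw [div_le_iff₀ ht.1]
      linarith [hcara]
    have key : (1-t)/(1+t)/t - t⁻¹ + 2*(1+t)⁻¹ = 0 := by
      have h1t : (1:ℝ) + t ≠ 0 := by have := ht.1; intro hc; linarith
      field_simp [ht.1.ne']
      ring
    linarith [hxge]
  -- monotonicity: F t ≤ F r on (0, r]
  have hmono : ∀ t ∈ Ioc (0:ℝ) r, F t ≤ F r := by
    intro t ht
    rcases eq_or_lt_of_le ht.2 with heq | hlt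
    · rw [heq]
    have hsub : Icc t r ⊆ Ioc (0:ℝ) r := fun s hs => ⟨lt_of_lt_of_le ht.1 hs.1, hs.2⟩
    have hint : interior (Icc t r) = Ioo t r := interior_Icc
    have hd' : ∀ s ∈ interior (Icc t r), HasDerivAt F
        (((deriv h (c s) * w0 / h (c s)).re) - s⁻¹ + 2 * (1+s)⁻¹) s := by
      intro s hs
      rw [hint] at hs
      exact hFd s ⟨lt_trans ht.1 hs.1, hs.2⟩
    have hmon := monotoneOn_of_deriv_nonneg (convex_Icc t r) (hFc.mono hsub)
      (fun s hs => ((hd' s hs).differentiableAt).differentiableWithinAt)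
      (fun s hs => by
        rw [(hd' s hs).deriv]
        rw [hint] at hs
        exact hFd_nonneg s ⟨lt_trans ht.1 hs.1, hs.2⟩)
    exact hmon (left_mem_Icc.2 ht.2) (right_mem_Icc.2 ht.2) ht.2
  -- the limit of F at 0⁺ is 0
  have hlim : Tendsto F (nhdsWithin 0 (Ioi (0:ℝ))) (nhds 0) := by
    have hc0 : c 0 = 0 := by
      show ((0:ℝ):ℂ) * w0 = 0
      simp
    have hds_cont : ContinuousAt (fun t => dslope h 0 (c t)) 0 := by
      apply ContinuousAt.comp
      · rw [hc0]
        exact continuousAt_dslope_same.2 (hd.differentiableAt hball)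
      · exact hccont.continuousAt
    have hds0 : dslope h 0 (c 0) = 1 := by
      rw [hc0, dslope_same, h1]
    have habs_cont : ContinuousAt (fun t => Complex.abs (dslope h 0 (c t))) 0 :=
      Complex.continuous_abs.continuousAt.comp hds_cont
    have habs0 : Complex.abs (dslope h 0 (c 0)) = 1 := by rw [hds0]; simp
    have hlog_cont : ContinuousAt (fun t => Real.log (Complex.abs (dslope h 0 (c t)))) 0 :=
      habs_cont.log (by rw [habs0]; norm_num)
    have hpart2 : ContinuousAt (fun t : ℝ => 2 * Real.log (1 + t)) 0 := by
      apply ContinuousAt.mul continuousAt_const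
      exact ((continuous_const.add continuous_id).continuousAt).log (by norm_num)
    have hFcont : ContinuousAt F 0 := hlog_cont.add hpart2
    have hF0 : F 0 = 0 := by
      show Real.log (Complex.abs (dslope h 0 (c 0))) + 2 * Real.log (1 + 0) = 0
      rw [habs0]
      simp
    have := hFcont.tendsto
    rw [hF0] at this
    exact this.mono_left nhdsWithin_le_nhds
  -- conclude 0 ≤ F r
  have hFr : 0 ≤ F r := by
    refine le_of_tendsto hlim ?_
    filter_upwards [Ioc_mem_nhdsGT_of_mem (Set.mem_Ico.2 ⟨le_refl 0, hr0⟩)] with t ht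
    exact hmono t ht
  -- unravel F r
  have hFr_eq : F r = Real.log (Complex.abs (h z) / r) + 2 * Real.log (1 + r) := by
    show Real.log (Complex.abs (dslope h 0 (c r))) + 2 * Real.log (1 + r) = _
    rw [hdsabs r ⟨hr0, le_refl r⟩, hcr]
  rw [hFr_eq] at hFr
  have hhz : 0 < Complex.abs (h z) := Complex.abs.pos (hhne z hz hz0)
  have hlog : 0 ≤ Real.log (Complex.abs (h z) / r * (1 + r)^2) := by
    rw [Real.log_mul (by positivity) (by positivity), Real.log_pow]
    push_cast
    linarith [hFr]
  have h1le : 1 ≤ Complex.abs (h z) / r * (1 + r)^2 := by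
    have hpos : 0 < Complex.abs (h z) / r * (1 + r)^2 := by positivity
    exact (Real.log_nonneg_iff hpos).1 hlog
  rw [div_le_iff₀ (by positivity : (0:ℝ) < (1 + r)^2)]
  have hmul := mul_le_mul_of_nonneg_right h1le hr0.le
  have e : Complex.abs (h z) / r * (1 + r)^2 * r = Complex.abs (h z) * (1 + r)^2 := by
    field_simp
  rw [e, one_mul] at hmul
  linarith


theorem stmt12
    (h g : ℂ → ℂ) (α : ℝ) (hα : α ∈ Set.Ico (0:ℝ) 1)
    (hd : DifferentiableOn ℂ h (Metric.ball (0:ℂ) 1))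
    (gd : DifferentiableOn ℂ g (Metric.ball (0:ℂ) 1))
    (h0 : h 0 = 0) (h1 : deriv h 0 = 1) (g0 : g 0 = 0)
    (hb1 : ‖deriv g 0‖ = α)
    (hsp : ∀ z ∈ Metric.ball (0:ℂ) 1, ‖deriv g z‖ < ‖deriv h z‖)
    (hinj : Set.InjOn h (Metric.ball (0:ℂ) 1))
    (hstar : ∀ w ∈ h '' (Metric.ball (0:ℂ) 1), segment ℝ 0 w ⊆ h '' (Metric.ball (0:ℂ) 1))
 :
    ∀ z ∈ Metric.ball (0:ℂ) 1, ‖z‖ < α →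
      ‖z‖ * (α - ‖z‖) / ((1 - α * ‖z‖) * (1 + ‖z‖) ^ 2) ≤ ‖g z‖ := by
  simp only [Complex.norm_eq_abs] at hb1 hsp ⊢
  intro z hz hzα
  obtain ⟨hα0, hα1⟩ := hα
  rcases eq_or_ne z 0 with rfl | hz0
  · simp [g0]
  have hr0 : 0 < Complex.abs z := Complex.abs.pos hz0
  have hr1 : Complex.abs z < 1 := mem_ball_zero_iff.1 hz
  have hball : ball (0:ℂ) 1 ∈ nhds (0:ℂ) := isOpen_ball.mem_nhds (mem_ball_self one_pos)
  have h'0 : ∀ x ∈ ball (0:ℂ) 1, deriv h x ≠ 0 := fun x hx => by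
    have := (Complex.abs.nonneg _).trans_lt (hsp x hx)
    exact fun he => by simp [he] at this
  have hhne : ∀ w ∈ ball (0:ℂ) 1, w ≠ 0 → h w ≠ 0 := by
    intro w hw hw0 hc
    exact hw0 (hinj hw (mem_ball_self one_pos) (by rw [hc, h0]))
  have hgle : ∀ w ∈ ball (0:ℂ) 1, Complex.abs (g w) ≤ Complex.abs (h w) :=
    fun w hw => aux_gle hd gd hinj hstar hw h0 g0 hsp
  -- the analytic quotient ω = (dslope g 0) / (dslope h 0)
  have hHne : ∀ w ∈ ball (0:ℂ) 1, dslope h 0 w ≠ 0 := by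
    intro w hw
    rcases eq_or_ne w 0 with rfl | hw0
    · rw [dslope_same, h1]; exact one_ne_zero
    · rw [dslope_of_ne _ hw0, slope_def_field, h0]
      intro hc
      apply hhne w hw hw0
      field_simp at hc
      simpa using hc
  set ω : ℂ → ℂ := fun w => dslope g 0 w / dslope h 0 w with hωdef
  have hωd : DifferentiableOn ℂ ω (ball (0:ℂ) 1) :=
    ((Complex.differentiableOn_dslope hball).2 gd).div
      ((Complex.differentiableOn_dslope hball).2 hd) hHne
  have hω0 : ω 0 = deriv g 0 := by
    show dslope g 0 0 / dslope h 0 0 = deriv g 0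
    rw [dslope_same, dslope_same, h1, div_one]
  have hωabs0 : Complex.abs (ω 0) = α := by rw [hω0, hb1]
  have hωval : ∀ w ∈ ball (0:ℂ) 1, w ≠ 0 → ω w = g w / h w := by
    intro w hw hw0
    show dslope g 0 w / dslope h 0 w = g w / h w
    rw [dslope_of_ne _ hw0, dslope_of_ne _ hw0, slope_def_field, slope_def_field, h0, g0]
    simp only [sub_zero]
    have hhwne : h w ≠ 0 := hhne w hw hw0
    rw [div_div_div_eq]
    rw [mul_comm (g w) w, mul_div_mul_left _ _ hw0]
  have hωb : ∀ w ∈ ball (0:ℂ) 1, Complex.abs (ω w) ≤ 1 := by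
    intro w hw
    rcases eq_or_ne w 0 with rfl | hw0
    · rw [hωabs0]; linarith
    · rw [hωval w hw hw0, map_div₀]
      exact div_le_one_of_le₀ (hgle w hw) (Complex.abs.nonneg _)
  -- Schwarz–Pick lower bound for |ω z|
  have hpick := aux_pick hωd hωb (by rw [hωabs0]; exact hα1) hz
  have hquad := aux_quad hωabs0 hα1 (Complex.abs.nonneg z) hzα (hωb z hz) hpick
  -- growth bound for |h z|
  have hgrow := aux_growth hd hinj hstar h'0 h0 h1 hz
  -- combine
  have hgz : Complex.abs (g z) = Complex.abs (ω z) * Complex.abs (h z) := by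
    rw [hωval z hz hz0, map_div₀]
    have : Complex.abs (h z) ≠ 0 := Complex.abs.ne_zero (hhne z hz hz0)
    field_simp
  have hpos : (0:ℝ) < (1 - α * Complex.abs z) * (1 + Complex.abs z) ^ 2 := by
    have : α * Complex.abs z < 1 := by nlinarith
    have h2 : (0:ℝ) < (1 + Complex.abs z)^2 := by positivity
    nlinarith
  rw [div_le_iff₀ hpos]
  have h2 : Complex.abs z ≤ Complex.abs (h z) * (1 + Complex.abs z)^2 := by
    have := hgrow
    rw [div_le_iff₀ (by positivity : (0:ℝ) < (1 + Complex.abs z)^2)] at this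
    exact this
  have h3 : (α - Complex.abs z) * Complex.abs z
      ≤ (Complex.abs (ω z) * (1 - α * Complex.abs z)) * (Complex.abs (h z) * (1 + Complex.abs z)^2) := by
    apply mul_le_mul hquad h2 hr0.le
    exact le_trans (by linarith) hquad
  calc Complex.abs z * (α - Complex.abs z) = (α - Complex.abs z) * Complex.abs z := by ring
    _ ≤ (Complex.abs (ω z) * (1 - α * Complex.abs z)) * (Complex.abs (h z) * (1 + Complex.abs z)^2) := h3
    _ = (Complex.abs (ω z) * Complex.abs (h z)) * ((1 - α * Complex.abs z) * (1 + Complex.abs z)^2) := by ring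
    _ = Complex.abs (g z) * ((1 - α * Complex.abs z) * (1 + Complex.abs z)^2) := by rw [hgz]
end
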